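/- arXiv:2605.02115 — 14 statements merged into one kernel-verified Lean document; each statement's English description precedes it below -/
import Mathlib

section
/- Let κ be a regular cardinal and let C be a κ-geometric category. Then a presheaf of types F : Cᵒᵖ ⥤ Type satisfies the sheaf condition for every presieve of coproduct inclusions — i.e., for every family (Xᵢ) of objects of C indexed by a κ-small type, F is a sheaf for the presieve {ιᵢ : Xᵢ ⟶ ∐ⱼ Xⱼ} of coproduct inclusions (Presieve.IsSheafFor) — if and only if F preserves κ-small products. -/
/-!
Statement 0: For a regular cardinal `κ` and a `κ`-geometric category `C`, a presheaf of
types `F : Cᵒᵖ ⥤ Type` satisfies the sheaf condition for every presieve of coproduct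
inclusions of a `κ`-small family if and only if `F` preserves `κ`-small products.
-/

open CategoryTheory Limits

universe u

/-- A presheaf `F : Cᵒᵖ ⥤ Type u` preserves `κ`-small products if it sends every coproduct
cocone of a family indexed by a `κ`-small type to a limit cone in `Type u`. -/
def PreservesKappaSmallProducts {C : Type u} [Category.{u} C] (κ : Cardinal.{u})
    (F : Cᵒᵖ ⥤ Type u) : Prop :=
  ∀ {ι : Type u}, Cardinal.mk ι < κ → ∀ (X : ι → C) (c : Cofan X), IsColimit c →
    Nonempty (IsLimit (F.mapCone c.op))

/-- A category `C` with pullbacks is `κ`-geometric if it has coproducts of all `κ`-small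
families of objects, and these coproducts are disjoint (the coproduct inclusions are
monomorphisms, and the pullback of two distinct inclusions is initial) and universal
(pullback along any morphism to the coproduct exhibits the source as the coproduct of
the pullbacks). -/
structure KappaGeometric (κ : Cardinal.{u}) (C : Type u) [Category.{u} C]
    [HasPullbacks C] : Prop where
  hasCoproduct : ∀ {ι : Type u}, Cardinal.mk ι < κ → ∀ X : ι → C, HasCoproduct X
  mono_inj : ∀ {ι : Type u}, Cardinal.mk ι < κ → ∀ (X : ι → C) (c : Cofan X),
    IsColimit c → ∀ i, Mono (c.inj i)
  disjoint : ∀ {ι : Type u}, Cardinal.mk ι < κ → ∀ (X : ι → C) (c : Cofan X),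
    IsColimit c → ∀ i j, i ≠ j → Nonempty (IsInitial (pullback (c.inj i) (c.inj j)))
  universal : ∀ {ι : Type u}, Cardinal.mk ι < κ → ∀ (X : ι → C) (c : Cofan X),
    IsColimit c → ∀ {Y : C} (f : Y ⟶ c.pt),
      Nonempty (IsColimit (Cofan.mk Y (fun i => pullback.snd (c.inj i) f)))


section Aux

open Opposite

variable {C : Type u} [Category.{u} C]

/-- An empty cofan on an initial object is a colimit cofan. -/
noncomputable def emptyCofanIsColimit {P : C} (hP : IsInitial P) :
    IsColimit (Cofan.mk P (fun x : PEmpty.{u+1} => (PEmpty.elim x : PEmpty.elim x ⟶ P))) :=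
  mkCofanColimit _ (fun s => hP.to s.pt) (fun _ x => x.elim) (fun _ m _ => hP.hom_ext m _)

lemma subsingleton_of_sheaf {κ : Cardinal.{u}} (hκ : κ.IsRegular) [HasPullbacks C]
    (F : Cᵒᵖ ⥤ Type u)
    (hs : ∀ {ι : Type u}, Cardinal.mk ι < κ → ∀ (X : ι → C) (c : Cofan X), IsColimit c →
        Presieve.IsSheafFor F (Presieve.ofArrows X c.inj))
    {P : C} (hP : IsInitial P) : ∀ a b : F.obj (op P), a = b := by
  intro a b
  have hκ0 : Cardinal.mk PEmpty.{u+1} < κ := by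
    simpa using hκ.pos
  have h := hs hκ0 PEmpty.elim _ (emptyCofanIsColimit hP)
  rw [Presieve.isSheafFor_arrows_iff] at h
  obtain ⟨t, -, ht⟩ := h (fun i => i.elim) (fun i => i.elim)
  rw [ht a (fun i => i.elim), ht b (fun i => i.elim)]

lemma compatible_of_sheaf {κ : Cardinal.{u}} (hκ : κ.IsRegular) [HasPullbacks C]
    (hC : KappaGeometric κ C) (F : Cᵒᵖ ⥤ Type u)
    (hs : ∀ {ι : Type u}, Cardinal.mk ι < κ → ∀ (X : ι → C) (c : Cofan X), IsColimit c →
        Presieve.IsSheafFor F (Presieve.ofArrows X c.inj))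
    {ι : Type u} (hι : Cardinal.mk ι < κ) (X : ι → C) (c : Cofan X) (hc : IsColimit c)
    (x : ∀ i, F.obj (op (X i))) : Presieve.Arrows.Compatible F c.inj x := by
  intro i j Z gi gj comm
  by_cases hij : i = j
  · subst hij
    have := hC.mono_inj hι X c hc i
    have hgg : gi = gj := by
      rw [← cancel_mono (c.inj i)]; exact comm
    rw [hgg]
  · obtain ⟨hP⟩ := hC.disjoint hι X c hc i j hij
    have hsub := subsingleton_of_sheaf hκ F hs hP
    have e1 : F.map (pullback.lift gi gj comm).op
        (F.map (pullback.fst (c.inj i) (c.inj j)).op (x i)) = F.map gi.op (x i) := by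
      rw [← FunctorToTypes.map_comp_apply, ← op_comp, pullback.lift_fst]
    have e2 : F.map (pullback.lift gi gj comm).op
        (F.map (pullback.snd (c.inj i) (c.inj j)).op (x j)) = F.map gj.op (x j) := by
      rw [← FunctorToTypes.map_comp_apply, ← op_comp, pullback.lift_snd]
    rw [← e1, ← e2, hsub (F.map (pullback.fst (c.inj i) (c.inj j)).op (x i))
      (F.map (pullback.snd (c.inj i) (c.inj j)).op (x j))]

noncomputable def isLimitOfExistsUnique (F : Cᵒᵖ ⥤ Type u) {ι : Type u} (X : ι → C)
    (c : Cofan X)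
    (h : ∀ x : ∀ i, F.obj (op (X i)),
      ∃! t : F.obj (op c.pt), ∀ i, F.map (c.inj i).op t = x i) :
    IsLimit (F.mapCone c.op) where
  lift s := TypeCat.ofHom fun y => (h (fun i => s.π.app ⟨i⟩ y)).choose
  fac s := by
    rintro ⟨i⟩
    ext y
    exact (h (fun i => s.π.app ⟨i⟩ y)).choose_spec.1 i
  uniq s m hm := by
    ext y
    exact (h (fun i => s.π.app ⟨i⟩ y)).choose_spec.2 (m y)
      (fun i => ConcreteCategory.congr_hom (hm ⟨i⟩) y)

lemma existsUnique_of_isLimit (F : Cᵒᵖ ⥤ Type u) {ι : Type u} (X : ι → C) (c : Cofan X)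
    (hl : IsLimit (F.mapCone c.op)) (x : ∀ i, F.obj (op (X i))) :
    ∃! t : F.obj (op c.pt), ∀ i, F.map (c.inj i).op t = x i := by
  let s : Cone (Discrete.functor (fun i => op (X i)) ⋙ F) :=
    { pt := PUnit
      π :=
        { app := fun j => TypeCat.ofHom fun _ => x j.as
          naturality := by
            rintro ⟨i⟩ ⟨j⟩ f
            have hij : i = j := Discrete.eq_of_hom f
            subst hij
            have hf : f = 𝟙 _ := Subsingleton.elim _ _
            subst hf
            simp } }
  refine ⟨hl.lift s PUnit.unit, fun i => ConcreteCategory.congr_hom (hl.fac s ⟨i⟩) PUnit.unit,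
    fun t' ht' => ?_⟩
  have := hl.uniq s (TypeCat.ofHom fun _ => t') (by rintro ⟨i⟩; ext y; exact ht' i)
  exact ConcreteCategory.congr_hom this PUnit.unit

end Aux

theorem statement0 (κ : Cardinal.{u}) (hκ : κ.IsRegular) (C : Type u) [Category.{u} C]
    [HasPullbacks C] (hC : KappaGeometric κ C) (F : Cᵒᵖ ⥤ Type u) :
    (∀ {ι : Type u}, Cardinal.mk ι < κ → ∀ (X : ι → C) (c : Cofan X), IsColimit c →
        Presieve.IsSheafFor F (Presieve.ofArrows X c.inj)) ↔
      PreservesKappaSmallProducts κ F := by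
  constructor
  · intro hs ι hι X c hc
    refine ⟨isLimitOfExistsUnique F X c (fun x => ?_)⟩
    have h := hs hι X c hc
    rw [Presieve.isSheafFor_arrows_iff] at h
    exact h x (compatible_of_sheaf hκ hC F @hs hι X c hc x)
  · intro hP ι hι X c hc
    obtain ⟨hl⟩ := hP hι X c hc
    rw [Presieve.isSheafFor_arrows_iff]
    intro x _
    exact existsUnique_of_isLimit F X c hl x
end

section
/- Let κ be a regular cardinal and let (C, τ) be a κ-geometric site. Then the Grothendieck topology generated by τ is subcanonical (every representable presheaf Cᵒᵖ ⥤ Type is a sheaf) if and only if for every τ-covering family {fᵢ : Uᵢ ⟶ X} the induced morphism Sigma.desc fᵢ : ∐ᵢ Uᵢ ⟶ X is an effective epimorphism in C. -/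
/-!
Statement 2: For a `κ`-geometric site `(C, τ)`, the topology generated by `τ` is
subcanonical iff for every `τ`-covering family the induced morphism from the coproduct is
an effective epimorphism.
-/

open CategoryTheory Limits

universe u

/-- A `κ`-geometric site is a `κ`-geometric category together with a Grothendieck
pretopology `τ` such that the presieve of coproduct inclusions of any `κ`-small family is a
`τ`-covering, and every `τ`-covering presieve is given by a family of morphisms indexed by a
`κ`-small type. -/
structure IsKappaGeometricSite (κ : Cardinal.{u}) (C : Type u) [Category.{u} C]
    [HasPullbacks C] (τ : Pretopology C) : Prop where
  geometric : KappaGeometric κ C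
  coproduct_mem : ∀ {ι : Type u}, Cardinal.mk ι < κ → ∀ (X : ι → C) (c : Cofan X),
    IsColimit c → Presieve.ofArrows X c.inj ∈ τ c.pt
  small_coverings : ∀ ⦃X : C⦄ (R : Presieve X), R ∈ τ X →
    ∃ (ι : Type u), Cardinal.mk ι < κ ∧
      ∃ (Z : ι → C) (g : ∀ i, Z i ⟶ X), R = Presieve.ofArrows Z g


/-- For a `κ`-geometric site `(C, τ)`, the Grothendieck topology generated
by `τ` is subcanonical (every representable presheaf is a sheaf) if and only if for every
`τ`-covering family `{fᵢ : Uᵢ ⟶ X}` the induced morphism `∐ᵢ Uᵢ ⟶ X` is an effective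
epimorphism. -/
theorem statement2 (κ : Cardinal.{u}) (hκ : κ.IsRegular) (C : Type u) [Category.{u} C]
    [HasPullbacks C] (τ : Pretopology C) (hτ : IsKappaGeometricSite κ C τ) :
    (∀ X : C, Presieve.IsSheaf τ.toGrothendieck (yoneda.obj X)) ↔
      ∀ {ι : Type u} {X : C} (U : ι → C) (f : ∀ i, U i ⟶ X),
        Presieve.ofArrows U f ∈ τ X →
          ∀ (c : Cofan U) (hc : IsColimit c), EffectiveEpi (hc.desc (Cofan.mk X f)) := by
  constructor
  · -- subcanonical → effective epi
    intro hsub ι X U f hmem c hc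
    set d : c.pt ⟶ X := hc.desc (Cofan.mk X f) with hd
    have hinj : ∀ i, c.inj i ≫ d = f i := fun i => hc.fac (Cofan.mk X f) ⟨i⟩
    have key : ∀ ⦃Y : C⦄ (g : Y ⟶ X), Presieve.ofArrows U f g →
        ∃ (i : ι) (p : Y ⟶ U i), p ≫ f i = g := by
      rintro Y g ⟨i⟩
      exact ⟨i, 𝟙 _, by simp⟩
    have exuniq : ∀ {W : C} (e : c.pt ⟶ W)
        (_ : ∀ {Z : C} (g₁ g₂ : Z ⟶ c.pt), g₁ ≫ d = g₂ ≫ d → g₁ ≫ e = g₂ ≫ e),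
        ∃ t : X ⟶ W, d ≫ t = e ∧ ∀ m : X ⟶ W, d ≫ m = e → m = t := by
      intro W e he
      set x : Presieve.FamilyOfElements (yoneda.obj W) (Presieve.ofArrows U f) :=
        fun Y g hg => (key g hg).choose_spec.choose ≫ c.inj (key g hg).choose ≫ e with hx
      have hcomp : x.Compatible := by
        intro Y₁ Y₂ V g₁ g₂ f₁ f₂ h₁ h₂ comm
        have e₁ := (key f₁ h₁).choose_spec.choose_spec
        have e₂ := (key f₂ h₂).choose_spec.choose_spec
        show g₁ ≫ (key f₁ h₁).choose_spec.choose ≫ c.inj (key f₁ h₁).choose ≫ e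
          = g₂ ≫ (key f₂ h₂).choose_spec.choose ≫ c.inj (key f₂ h₂).choose ≫ e
        calc g₁ ≫ (key f₁ h₁).choose_spec.choose ≫ c.inj (key f₁ h₁).choose ≫ e
            = ((g₁ ≫ (key f₁ h₁).choose_spec.choose) ≫ c.inj (key f₁ h₁).choose) ≫ e := by
              simp
          _ = ((g₂ ≫ (key f₂ h₂).choose_spec.choose) ≫ c.inj (key f₂ h₂).choose) ≫ e := by
              apply he
              simp only [Category.assoc, hinj, e₁, e₂, comm]
          _ = g₂ ≫ (key f₂ h₂).choose_spec.choose ≫ c.inj (key f₂ h₂).choose ≫ e := by simp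
      obtain ⟨t, ht, hu⟩ := (Presieve.isSheaf_pretopology τ).mp (hsub W) _ hmem x hcomp
      refine ⟨t, ?_, ?_⟩
      · apply hc.hom_ext
        rintro ⟨i⟩
        have e₁ := (key (f i) (Presieve.ofArrows.mk i)).choose_spec.choose_spec
        have ham : f i ≫ t = (key (f i) (Presieve.ofArrows.mk i)).choose_spec.choose
            ≫ c.inj (key (f i) (Presieve.ofArrows.mk i)).choose ≫ e :=
          ht (f i) (Presieve.ofArrows.mk i)
        have step : (key (f i) (Presieve.ofArrows.mk i)).choose_spec.choose
            ≫ c.inj (key (f i) (Presieve.ofArrows.mk i)).choose ≫ e = c.inj i ≫ e := by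
          rw [← Category.assoc]
          apply he
          rw [Category.assoc, hinj, hinj, e₁]
        show c.inj i ≫ d ≫ t = c.inj i ≫ e
        rw [← Category.assoc, hinj, ham, step]
      · intro m hm
        apply hu
        intro Y g' hg
        have e₁ := (key g' hg).choose_spec.choose_spec
        show g' ≫ m = (key g' hg).choose_spec.choose ≫ c.inj (key g' hg).choose ≫ e
        calc g' ≫ m
            = ((key g' hg).choose_spec.choose ≫ f (key g' hg).choose) ≫ m := by rw [e₁]
          _ = ((key g' hg).choose_spec.choose ≫ c.inj (key g' hg).choose ≫ d) ≫ m := by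
              rw [hinj]
          _ = (key g' hg).choose_spec.choose ≫ c.inj (key g' hg).choose ≫ e := by
              simp only [Category.assoc]; rw [hm]
    exact ⟨⟨{ desc := fun e he => (exuniq e he).choose,
              fac := fun e he => (exuniq e he).choose_spec.1,
              uniq := fun e he m hm => (exuniq e he).choose_spec.2 m hm }⟩⟩
  · -- effective epi → subcanonical
    intro heff W
    rw [Presieve.isSheaf_pretopology]
    intro X R hR
    obtain ⟨ι, hι, Z, g, rfl⟩ := hτ.small_coverings R hR
    haveI := hτ.geometric.hasCoproduct hι Z
    set c : Cofan Z := Cofan.mk (∐ Z) (Sigma.ι Z) with hcdef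
    have hc : IsColimit c := coproductIsCoproduct Z
    set d : c.pt ⟶ X := hc.desc (Cofan.mk X g) with hd
    have hinj : ∀ i, c.inj i ≫ d = g i := fun i => hc.fac (Cofan.mk X g) ⟨i⟩
    haveI : EffectiveEpi d := heff Z g hR c hc
    intro x hx
    set e : c.pt ⟶ W := hc.desc (Cofan.mk W fun i => x (g i) (Presieve.ofArrows.mk i))
      with hedef
    have hei : ∀ i, c.inj i ≫ e = x (g i) (Presieve.ofArrows.mk i) :=
      fun i => hc.fac (Cofan.mk W fun i => x (g i) (Presieve.ofArrows.mk i)) ⟨i⟩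
    have he : ∀ {Y : C} (a b : Y ⟶ c.pt), a ≫ d = b ≫ d → a ≫ e = b ≫ e := by
      intro Y a b hab
      obtain ⟨ha⟩ := hτ.geometric.universal hι Z c hc a
      apply ha.hom_ext
      rintro ⟨i⟩
      obtain ⟨hb⟩ := hτ.geometric.universal hι Z c hc (pullback.snd (c.inj i) a ≫ b)
      apply hb.hom_ext
      rintro ⟨j⟩
      show pullback.snd (c.inj j) _ ≫ pullback.snd (c.inj i) a ≫ a ≫ e
        = pullback.snd (c.inj j) _ ≫ pullback.snd (c.inj i) a ≫ b ≫ e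
      have c₁ : pullback.snd (c.inj i) a ≫ a = pullback.fst (c.inj i) a ≫ c.inj i :=
        pullback.condition.symm
      have c₂ : pullback.snd (c.inj j) (pullback.snd (c.inj i) a ≫ b)
          ≫ pullback.snd (c.inj i) a ≫ b
          = pullback.fst (c.inj j) (pullback.snd (c.inj i) a ≫ b) ≫ c.inj j :=
        pullback.condition.symm
      have comm : (pullback.snd (c.inj j) (pullback.snd (c.inj i) a ≫ b)
            ≫ pullback.fst (c.inj i) a) ≫ g i
          = pullback.fst (c.inj j) (pullback.snd (c.inj i) a ≫ b) ≫ g j := by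
        calc (pullback.snd (c.inj j) (pullback.snd (c.inj i) a ≫ b)
              ≫ pullback.fst (c.inj i) a) ≫ g i
            = pullback.snd (c.inj j) _ ≫ (pullback.fst (c.inj i) a ≫ c.inj i) ≫ d := by
              simp [hinj]
          _ = pullback.snd (c.inj j) _ ≫ (pullback.snd (c.inj i) a ≫ a) ≫ d := by rw [c₁]
          _ = pullback.snd (c.inj j) _ ≫ (pullback.snd (c.inj i) a ≫ b) ≫ d := by
              simp only [Category.assoc, hab]
          _ = (pullback.snd (c.inj j) _ ≫ pullback.snd (c.inj i) a ≫ b) ≫ d := by simp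
          _ = (pullback.fst (c.inj j) _ ≫ c.inj j) ≫ d := by rw [c₂]
          _ = pullback.fst (c.inj j) _ ≫ g j := by rw [Category.assoc, hinj]
      calc pullback.snd (c.inj j) _ ≫ pullback.snd (c.inj i) a ≫ a ≫ e
          = (pullback.snd (c.inj j) _ ≫ pullback.fst (c.inj i) a) ≫ c.inj i ≫ e := by
            rw [← Category.assoc (pullback.snd (c.inj i) a), c₁]; simp
        _ = (pullback.snd (c.inj j) _ ≫ pullback.fst (c.inj i) a)
            ≫ x (g i) (Presieve.ofArrows.mk i) := by rw [hei]
        _ = pullback.fst (c.inj j) _ ≫ x (g j) (Presieve.ofArrows.mk j) :=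
            hx _ _ (Presieve.ofArrows.mk i) (Presieve.ofArrows.mk j) comm
        _ = pullback.fst (c.inj j) _ ≫ c.inj j ≫ e := by rw [hei]
        _ = pullback.snd (c.inj j) _ ≫ pullback.snd (c.inj i) a ≫ b ≫ e := by
            rw [← Category.assoc, ← c₂]; simp
    refine ⟨EffectiveEpi.desc d e he, ?_, ?_⟩
    · rintro Y f ⟨i⟩
      show g i ≫ EffectiveEpi.desc d e he = x (g i) (Presieve.ofArrows.mk i)
      calc g i ≫ EffectiveEpi.desc d e he
          = (c.inj i ≫ d) ≫ EffectiveEpi.desc d e he := by rw [hinj]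
        _ = c.inj i ≫ e := by rw [Category.assoc, EffectiveEpi.fac]
        _ = x (g i) (Presieve.ofArrows.mk i) := hei i
    · intro m hm
      apply EffectiveEpi.uniq d e he
      apply hc.hom_ext
      rintro ⟨i⟩
      show c.inj i ≫ d ≫ m = c.inj i ≫ e
      rw [← Category.assoc, hinj, hei]
      exact hm (g i) (Presieve.ofArrows.mk i)
end

section
/- Let C be a small category equipped with a Grothendieck topology J, let F : Cᵒᵖ ⥤ Type be a presheaf, and let p : CostructuredArrow yoneda F ⥤ C be the projection from the slice category. Then there exists a Grothendieck topology K on CostructuredArrow yoneda F such that for every object U and every sieve T on U, T is K-covering if and only if T = Sieve.functorPullback p S for some J-covering sieve S on p(U). -/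
/-!
Statement 3: For a small category `C` with a Grothendieck topology `J` and a presheaf
`F : Cᵒᵖ ⥤ Type`, there exists a Grothendieck topology `K` on the slice category
`CostructuredArrow yoneda F` whose covering sieves on an object `U` are exactly the
pullbacks along the projection of the `J`-covering sieves on the underlying object.
-/

open CategoryTheory Limits

universe u

namespace Statement3Aux

variable {C : Type u} [SmallCategory C] {F : Cᵒᵖ ⥤ Type u}

/-- The equivalence between sieves on `U : CostructuredArrow yoneda F` and sieves
on the underlying object `U.left`. -/
def sieveEquiv (U : CostructuredArrow yoneda F) :
    Sieve U ≃ Sieve U.left where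
  toFun S := Sieve.functorPushforward (CostructuredArrow.proj yoneda F) S
  invFun S' := Sieve.functorPullback (CostructuredArrow.proj yoneda F) S'
  left_inv S := by
    ext Z g
    dsimp [Presieve.functorPullback, Presieve.functorPushforward]
    constructor
    · rintro ⟨W, a, b, h, w⟩
      let c : Z ⟶ W := CostructuredArrow.homMk b (by
        rw [← CostructuredArrow.w a]
        erw [← Functor.map_comp_assoc, ← w, CostructuredArrow.w g])
      rw [show g = c ≫ a from CostructuredArrow.hom_ext _ _ w]
      exact S.downward_closed h _
    · intro h
      exact ⟨Z, g, 𝟙 _, h, (Category.id_comp _).symm⟩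
  right_inv S := by
    ext Z g
    dsimp [Presieve.functorPullback, Presieve.functorPushforward]
    constructor
    · rintro ⟨W, a, b, h, rfl⟩
      exact S.downward_closed h _
    · intro h
      exact ⟨CostructuredArrow.mk (yoneda.map g ≫ U.hom),
        CostructuredArrow.homMk g rfl, 𝟙 _, h, (Category.id_comp _).symm⟩

@[simp]
lemma sieveEquiv_top (U : CostructuredArrow yoneda F) :
    sieveEquiv U ⊤ = ⊤ := by
  ext Z g
  simp only [Sieve.top_apply, iff_true]
  exact ⟨U, 𝟙 U, g, trivial, (Category.comp_id _).symm⟩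

lemma sieveEquiv_pullback {U₁ U₂ : CostructuredArrow yoneda F} (f : U₁ ⟶ U₂)
    (S : Sieve U₂) :
    sieveEquiv _ (S.pullback f) = (sieveEquiv _ S).pullback f.left := by
  ext Z g
  dsimp [sieveEquiv, Presieve.functorPushforward]
  constructor
  · rintro ⟨W, a, b, h, rfl⟩
    exact ⟨W, a ≫ f, b, h, Category.assoc _ _ _⟩
  · rintro ⟨W, a, b, h, w⟩
    let T : CostructuredArrow yoneda F := CostructuredArrow.mk (yoneda.map g ≫ U₁.hom)
    let c : T ⟶ U₁ := CostructuredArrow.homMk g rfl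
    let d : T ⟶ W := CostructuredArrow.homMk b (by
      dsimp [T]
      rw [← CostructuredArrow.w a]
      erw [← Functor.map_comp_assoc, ← w,
        Functor.map_comp_assoc, CostructuredArrow.w f])
    refine ⟨T, c, 𝟙 Z, ?_, (Category.id_comp _).symm⟩
    change S.arrows (c ≫ f)
    rw [show c ≫ f = d ≫ a from CostructuredArrow.hom_ext _ _ w]
    exact S.downward_closed h _

lemma sieveEquiv_iff {U : CostructuredArrow yoneda F} (S : Sieve U) {Z : C}
    (f : Z ⟶ U.left) :
    sieveEquiv U S f ↔
      S (CostructuredArrow.homMk f rfl :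
        CostructuredArrow.mk (yoneda.map f ≫ U.hom) ⟶ U) := by
  obtain ⟨S, rfl⟩ := (sieveEquiv U).symm.surjective S
  rw [Equiv.apply_symm_apply]
  rfl

end Statement3Aux

theorem statement3 {C : Type u} [SmallCategory C] (J : GrothendieckTopology C)
    (F : Cᵒᵖ ⥤ Type u) :
    ∃ K : GrothendieckTopology (CostructuredArrow yoneda F),
      ∀ (U : CostructuredArrow yoneda F) (T : Sieve U),
        T ∈ K U ↔
          ∃ S ∈ J ((CostructuredArrow.proj yoneda F).obj U),
            T = S.functorPullback (CostructuredArrow.proj yoneda F) := by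
  open Statement3Aux in
  refine ⟨{
    sieves := fun U S => sieveEquiv U S ∈ J U.left
    top_mem' := fun U => by
      change _ ∈ J U.left
      simp
    pullback_stable' := fun U₁ U₂ S₁ f h₁ => by
      change _ ∈ J _ at h₁ ⊢
      rw [sieveEquiv_pullback]
      exact J.pullback_stable _ h₁
    transitive' := fun U S hS R hR => J.transitive hS _ (fun Z f hf => by
      have hf' : _ ∈ J _ := hR ((sieveEquiv_iff _ _).1 hf)
      rw [sieveEquiv_pullback] at hf'
      exact hf') }, fun U T => ?_⟩
  constructor
  · intro hT
    exact ⟨sieveEquiv U T, hT, ((sieveEquiv U).left_inv T).symm⟩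
  · rintro ⟨S, hS, rfl⟩
    change sieveEquiv U ((sieveEquiv U).symm S) ∈ J _
    erw [Equiv.apply_symm_apply]
    exact hS
end

section
/- Let C be a small category equipped with a Grothendieck topology J, let F : Cᵒᵖ ⥤ Type be a J-sheaf, and let K be the slice topology J_{/F} on CostructuredArrow yoneda F. Then, under Mathlib's canonical equivalence Over F ≌ ((CostructuredArrow yoneda F)ᵒᵖ ⥤ Type) (overEquivPresheafCostructuredArrow), an object η : E ⟶ F of Over F has J-sheaf domain E if and only if the corresponding presheaf on CostructuredArrow yoneda F is a K-sheaf; consequently the equivalence restricts to an equivalence between the slice of J-sheaves over F and the category of K-sheaves on CostructuredArrow yoneda F. -/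
/-!
Statement 4: Let `C` be a small category with a Grothendieck topology `J`, let
`F : Cᵒᵖ ⥤ Type` be a `J`-sheaf, and let `K` be the slice topology `J_{/F}` on
`CostructuredArrow yoneda F`. Under the canonical equivalence
`Over F ≌ ((CostructuredArrow yoneda F)ᵒᵖ ⥤ Type)`, an object `η : E ⟶ F` of `Over F` has
`J`-sheaf domain iff the corresponding presheaf is a `K`-sheaf; consequently the
equivalence restricts to an equivalence between the slice of `J`-sheaves over `F` and the
category of `K`-sheaves.
-/

open CategoryTheory Limits

universe u

section Aux

open Opposite OverPresheafAux

variable {C : Type u} [SmallCategory C]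

private lemma key (J : GrothendieckTopology C)
    (F : Cᵒᵖ ⥤ Type u) (hF : Presieve.IsSheaf J F)
    (K : GrothendieckTopology (CostructuredArrow yoneda F))
    (hK : ∀ (U : CostructuredArrow yoneda F) (T : Sieve U),
      T ∈ K U ↔
        ∃ S ∈ J ((CostructuredArrow.proj yoneda F).obj U),
          T = S.functorPullback (CostructuredArrow.proj yoneda F))
    (η : Over F) :
    Presieve.IsSheaf J η.left ↔ Presieve.IsSheaf K (restrictedYonedaObj η.hom) := by
  set E := η.left with hE
  set ν := η.hom with hν
  constructor
  · intro hEsh U T hT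
    obtain ⟨S, hS, rfl⟩ := (hK U T).1 hT
    intro x hx
    let y : Presieve.FamilyOfElements E S.arrows := fun Z f hf =>
      (x (CostructuredArrow.homMk f rfl :
          CostructuredArrow.mk (yoneda.map f ≫ U.hom) ⟶ U) hf).val
    have hy : y.Compatible := by
      intro Z₁ Z₂ W g₁ g₂ f₁ f₂ h₁ h₂ comm
      let φ₁ : CostructuredArrow.mk (yoneda.map f₁ ≫ U.hom) ⟶ U := CostructuredArrow.homMk f₁ rfl
      let φ₂ : CostructuredArrow.mk (yoneda.map f₂ ≫ U.hom) ⟶ U := CostructuredArrow.homMk f₂ rfl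
      let ψ₁ : CostructuredArrow.mk (yoneda.map (g₁ ≫ f₁) ≫ U.hom) ⟶
          CostructuredArrow.mk (yoneda.map f₁ ≫ U.hom) := CostructuredArrow.homMk g₁ (by simp; exact (Category.assoc _ _ _).symm)
      let ψ₂ : CostructuredArrow.mk (yoneda.map (g₁ ≫ f₁) ≫ U.hom) ⟶
          CostructuredArrow.mk (yoneda.map f₂ ≫ U.hom) :=
        CostructuredArrow.homMk g₂ (by rw [comm]; simp; exact (Category.assoc _ _ _).symm)
      have hφ₁ : (S.functorPullback (CostructuredArrow.proj yoneda F)).arrows φ₁ := h₁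
      have hφ₂ : (S.functorPullback (CostructuredArrow.proj yoneda F)).arrows φ₂ := h₂
      have hcomm : ψ₁ ≫ φ₁ = ψ₂ ≫ φ₂ := by
        apply CostructuredArrow.hom_ext
        exact comm
      exact congrArg OverArrows.val (hx ψ₁ ψ₂ hφ₁ hφ₂ hcomm)
    obtain ⟨e, he, he'⟩ := hEsh S hS y hy
    have hηe : ν.app (op U.left) e = yonedaEquiv U.hom := by
      refine (hF S hS).isSeparatedFor.ext fun Z f hf => ?_
      have h1 : F.map f.op (ν.app (op U.left) e) = ν.app (op Z) (y f hf) := by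
        rw [← he f hf]
        exact (FunctorToTypes.naturality ν f.op e).symm
      have h2 := (x (CostructuredArrow.homMk f rfl :
          CostructuredArrow.mk (yoneda.map f ≫ U.hom) ⟶ U) hf).app_val
      rw [h1, show ν.app (op Z) (y f hf) = yonedaEquiv (yoneda.map f ≫ U.hom) from h2]
      exact (yonedaEquiv_naturality U.hom f).symm
    refine ⟨⟨e, ⟨hηe⟩⟩, ?_, ?_⟩
    · intro V φ hφ
      apply OverArrows.ext
      have h1 : E.map φ.left.op e = y φ.left hφ := he φ.left hφ
      let φ' : CostructuredArrow.mk (yoneda.map φ.left ≫ U.hom) ⟶ U :=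
        CostructuredArrow.homMk φ.left rfl
      let ι₁ : CostructuredArrow.mk (yoneda.map φ.left ≫ U.hom) ⟶
          CostructuredArrow.mk (yoneda.map φ.left ≫ U.hom) := CostructuredArrow.homMk (𝟙 V.left) (by simp)
      let ι₂ : CostructuredArrow.mk (yoneda.map φ.left ≫ U.hom) ⟶ V :=
        CostructuredArrow.homMk (𝟙 V.left) (by simpa using φ.w)
      have hφ' : (S.functorPullback (CostructuredArrow.proj yoneda F)).arrows φ' := hφ
      have hcomm : ι₁ ≫ φ' = ι₂ ≫ φ := by
        apply CostructuredArrow.hom_ext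
        simp [ι₁, ι₂, φ']
      have h2 := congrArg OverArrows.val (hx ι₁ ι₂ hφ' hφ hcomm)
      have h3 : E.map ι₁.left.op (x φ' hφ').val = E.map ι₂.left.op (x φ hφ).val := h2
      have h4 : E.map (𝟙 V.left).op (x φ' hφ').val = E.map (𝟙 V.left).op (x φ hφ).val := h3
      simp only [op_id, CategoryTheory.Functor.map_id, types_id_apply] at h4
      exact h1.trans h4
    · intro u' hu'
      apply OverArrows.ext
      refine he' u'.val fun Z f hf => ?_
      let φ' : CostructuredArrow.mk (yoneda.map f ≫ U.hom) ⟶ U := CostructuredArrow.homMk f rfl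
      have hφ' : (S.functorPullback (CostructuredArrow.proj yoneda F)).arrows φ' := hf
      exact congrArg OverArrows.val (hu' φ' hφ')
  · intro hGsh X S hS y hy
    let z : Presieve.FamilyOfElements F S.arrows := fun Z f hf => ν.app (op Z) (y f hf)
    have hz : z.Compatible := by
      intro Z₁ Z₂ W g₁ g₂ f₁ f₂ h₁ h₂ comm
      show F.map g₁.op (ν.app _ (y f₁ h₁)) = F.map g₂.op (ν.app _ (y f₂ h₂))
      rw [← FunctorToTypes.naturality ν g₁.op, ← FunctorToTypes.naturality ν g₂.op,
        hy g₁ g₂ h₁ h₂ comm]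
    obtain ⟨t, ht, ht'⟩ := hF S hS z hz
    let U : CostructuredArrow yoneda F := CostructuredArrow.mk (yonedaEquiv.symm t)
    let S' : Sieve ((CostructuredArrow.proj yoneda F).obj U) := S
    have hS' : S' ∈ J ((CostructuredArrow.proj yoneda F).obj U) := hS
    have hTU : S'.functorPullback (CostructuredArrow.proj yoneda F) ∈ K U :=
      (hK U _).2 ⟨S', hS', rfl⟩
    let x : Presieve.FamilyOfElements (restrictedYonedaObj ν)
        (S'.functorPullback (CostructuredArrow.proj yoneda F)).arrows := fun V φ hφ =>
      ⟨y φ.left hφ, ⟨by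
        have h1 : ν.app (op V.left) (y φ.left hφ) = F.map φ.left.op t := (ht φ.left hφ).symm
        have h2 : yonedaEquiv V.hom = F.map φ.left.op t := by
          rw [← CostructuredArrow.w φ, ← yonedaEquiv_naturality]
          simp [U]
        exact h1.trans h2.symm⟩⟩
    have hx : x.Compatible := by
      intro V₁ V₂ W g₁ g₂ φ₁ φ₂ h₁ h₂ comm
      apply OverArrows.ext
      exact hy g₁.left g₂.left h₁ h₂ (by simpa using congrArg CommaMorphism.left comm)
    obtain ⟨u, hu, hu'⟩ := hGsh _ hTU x hx
    refine ⟨u.val, ?_, ?_⟩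
    · intro Z f hf
      let φ' : CostructuredArrow.mk (yoneda.map f ≫ U.hom) ⟶ U := CostructuredArrow.homMk f rfl
      have hφ' : (S'.functorPullback (CostructuredArrow.proj yoneda F)).arrows φ' := hf
      exact congrArg OverArrows.val (hu φ' hφ')
    · intro e' he'
      have hνe' : ν.app (op X) e' = t := by
        refine ht' _ fun Z f hf => ?_
        show F.map f.op (ν.app _ e') = z f hf
        rw [← FunctorToTypes.naturality ν f.op, he' f hf]
      have hmem : ν.app (op U.left) e' = yonedaEquiv U.hom := by
        have h3 : yonedaEquiv U.hom = t := by simp [U]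
        rw [h3]
        exact hνe'
      have : (⟨e', ⟨hmem⟩⟩ : OverArrows ν U.hom) = u := by
        refine hu' _ fun V φ hφ => ?_
        apply OverArrows.ext
        exact he' φ.left hφ
      exact congrArg OverArrows.val this

end Aux

theorem statement4 {C : Type u} [SmallCategory C] (J : GrothendieckTopology C)
    (F : Cᵒᵖ ⥤ Type u) (hF : Presieve.IsSheaf J F)
    (K : GrothendieckTopology (CostructuredArrow yoneda F))
    (hK : ∀ (U : CostructuredArrow yoneda F) (T : Sieve U),
      T ∈ K U ↔
        ∃ S ∈ J ((CostructuredArrow.proj yoneda F).obj U),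
          T = S.functorPullback (CostructuredArrow.proj yoneda F)) :
    (∀ η : Over F, Presieve.IsSheaf J η.left ↔
        Presieve.IsSheaf K ((overEquivPresheafCostructuredArrow F).functor.obj η)) ∧
      Nonempty ((ObjectProperty.FullSubcategory fun η : Over F => Presieve.IsSheaf J η.left) ≌
        Sheaf K (Type u)) := by
  have h : ∀ η : Over F, Presieve.IsSheaf J η.left ↔
      Presieve.IsSheaf K ((overEquivPresheafCostructuredArrow F).functor.obj η) :=
    fun η => key J F hF K hK η
  refine ⟨h, ⟨?_⟩⟩
  let e := overEquivPresheafCostructuredArrow F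
  refine CategoryTheory.Equivalence.mk
    { obj := fun η => ⟨e.functor.obj η.obj,
        (isSheaf_iff_isSheaf_of_type K _).2 ((h η.obj).1 η.property)⟩
      map := fun f => ⟨e.functor.map f.hom⟩
      map_id := fun η => Sheaf.hom_ext (e.functor.map_id η.obj)
      map_comp := fun f g => Sheaf.hom_ext (e.functor.map_comp f.hom g.hom) }
    { obj := fun G => ⟨e.inverse.obj G.val,
        (h _).2 (Presieve.isSheaf_iso K (e.counitIso.app G.val).symm
          ((isSheaf_iff_isSheaf_of_type K _).1 G.cond))⟩
      map := fun f => ⟨e.inverse.map f.hom⟩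
      map_id := fun G => InducedCategory.hom_ext (e.inverse.map_id G.val)
      map_comp := fun f g => InducedCategory.hom_ext (e.inverse.map_comp f.hom g.hom) }
    (NatIso.ofComponents
      (fun η => ⟨⟨e.unit.app η.obj⟩, ⟨e.unitInv.app η.obj⟩,
        InducedCategory.hom_ext (e.unitIso.hom_inv_id_app η.obj), InducedCategory.hom_ext (e.unitIso.inv_hom_id_app η.obj)⟩)
      (fun f => InducedCategory.hom_ext (e.unit.naturality f.hom)))
    (NatIso.ofComponents
      (fun G => ⟨⟨e.counit.app G.val⟩, ⟨e.counitInv.app G.val⟩,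
        Sheaf.hom_ext (e.counitIso.hom_inv_id_app G.val),
        Sheaf.hom_ext (e.counitIso.inv_hom_id_app G.val)⟩)
      (fun f => Sheaf.hom_ext (e.counit.naturality f.hom)))
end

section
/- Let C be a small category equipped with a Grothendieck topology J, let F : Cᵒᵖ ⥤ Type be a presheaf, let p : CostructuredArrow yoneda F ⥤ C be the projection, and let K be the slice topology J_{/F}. Then: (a) for every J-sheaf G : Cᵒᵖ ⥤ Type, the restricted presheaf p.op ⋙ G is a K-sheaf on CostructuredArrow yoneda F; and (b) for every K-sheaf H : (CostructuredArrow yoneda F)ᵒᵖ ⥤ Type, any pointwise right Kan extension of H along p.op is a J-sheaf on C. -/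
/-!
Statement 5: Let `C` be a small category with a Grothendieck topology `J`, let
`F : Cᵒᵖ ⥤ Type` be a presheaf, let `p : CostructuredArrow yoneda F ⥤ C` be the
projection and `K` the slice topology `J_{/F}`. Then (a) restriction along `p` carries
`J`-sheaves to `K`-sheaves, and (b) any pointwise right Kan extension along `p.op` of a
`K`-sheaf is a `J`-sheaf.
-/

open CategoryTheory Limits

universe u

section Aux

variable {C : Type u} [SmallCategory C] (F : Cᵒᵖ ⥤ Type u)

/-- The projection from the slice is compatible-preserving. -/
lemma aux_compatiblePreserving (J : GrothendieckTopology C) :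
    CompatiblePreserving.{u} J (CostructuredArrow.proj yoneda F) := by
  constructor
  intro ℱ Z T x hx Y₁ Y₂ X f₁ f₂ g₁ g₂ hg₁ hg₂ e
  have e' : f₁ ≫ g₁.left = f₂ ≫ g₂.left := e
  have w : yoneda.map f₂ ≫ Y₂.hom = yoneda.map f₁ ≫ Y₁.hom := by
    rw [← CostructuredArrow.w g₁, ← CostructuredArrow.w g₂]
    exact (Category.assoc _ _ _).symm.trans ((congrArg (· ≫ Z.hom) ((yoneda.map_comp _ _).symm.trans
      ((congrArg yoneda.map e'.symm).trans (yoneda.map_comp _ _)))).trans (Category.assoc _ _ _))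
  let W : CostructuredArrow yoneda F := CostructuredArrow.mk (yoneda.map f₁ ≫ Y₁.hom)
  let h₁ : W ⟶ Y₁ := CostructuredArrow.homMk f₁ rfl
  let h₂ : W ⟶ Y₂ := CostructuredArrow.homMk f₂ w
  have comm : h₁ ≫ g₁ = h₂ ≫ g₂ := by
    apply CostructuredArrow.hom_ext
    exact e'
  exact hx h₁ h₂ hg₁ hg₂ comm

/-- The projection from the slice is cover-preserving. -/
lemma aux_coverPreserving (J : GrothendieckTopology C)
    (K : GrothendieckTopology (CostructuredArrow yoneda F))
    (hK : ∀ (U : CostructuredArrow yoneda F) (T : Sieve U),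
      T ∈ K U ↔
        ∃ S ∈ J ((CostructuredArrow.proj yoneda F).obj U),
          T = S.functorPullback (CostructuredArrow.proj yoneda F)) :
    CoverPreserving K J (CostructuredArrow.proj yoneda F) := by
  constructor
  intro U S hS
  obtain ⟨S', hS', rfl⟩ := (hK U S).1 hS
  refine J.superset_covering ?_ hS'
  intro Y f hf
  exact ⟨CostructuredArrow.mk (yoneda.map f ≫ U.hom),
    CostructuredArrow.homMk f rfl, 𝟙 Y, hf, (Category.id_comp f).symm⟩

/-- The projection from the slice is cocontinuous. -/
lemma aux_isCocontinuous (J : GrothendieckTopology C)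
    (K : GrothendieckTopology (CostructuredArrow yoneda F))
    (hK : ∀ (U : CostructuredArrow yoneda F) (T : Sieve U),
      T ∈ K U ↔
        ∃ S ∈ J ((CostructuredArrow.proj yoneda F).obj U),
          T = S.functorPullback (CostructuredArrow.proj yoneda F)) :
    (CostructuredArrow.proj yoneda F).IsCocontinuous K J := by
  constructor
  intro U S hS
  exact (hK U _).2 ⟨S, hS, rfl⟩

end Aux

theorem statement5 {C : Type u} [SmallCategory C] (J : GrothendieckTopology C)
    (F : Cᵒᵖ ⥤ Type u)
    (K : GrothendieckTopology (CostructuredArrow yoneda F))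
    (hK : ∀ (U : CostructuredArrow yoneda F) (T : Sieve U),
      T ∈ K U ↔
        ∃ S ∈ J ((CostructuredArrow.proj yoneda F).obj U),
          T = S.functorPullback (CostructuredArrow.proj yoneda F)) :
    (∀ G : Cᵒᵖ ⥤ Type u, Presieve.IsSheaf J G →
        Presieve.IsSheaf K ((CostructuredArrow.proj yoneda F).op ⋙ G)) ∧
      (∀ H : (CostructuredArrow yoneda F)ᵒᵖ ⥤ Type u, Presieve.IsSheaf K H →
        ∀ (H' : Cᵒᵖ ⥤ Type u) (α : (CostructuredArrow.proj yoneda F).op ⋙ H' ⟶ H),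
          (Functor.RightExtension.mk H' α).IsPointwiseRightKanExtension →
            Presieve.IsSheaf J H') := by
  have hcont : (CostructuredArrow.proj yoneda F).IsContinuous K J :=
    Functor.isContinuous_of_coverPreserving (aux_compatiblePreserving F J)
      (aux_coverPreserving F J K hK)
  have hcocont : (CostructuredArrow.proj yoneda F).IsCocontinuous K J :=
    aux_isCocontinuous F J K hK
  constructor
  · intro G hG
    exact (CostructuredArrow.proj yoneda F).op_comp_isSheaf_of_types K J
      ⟨G, (isSheaf_iff_isSheaf_of_type J G).2 hG⟩
  · intro H hH H' α hα
    rw [← isSheaf_iff_isSheaf_of_type]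
    rw [Presheaf.isSheaf_iff_multifork]
    intro X S
    exact ⟨RanIsSheafOfIsCocontinuous.isLimitMultifork
      ((isSheaf_iff_isSheaf_of_type K H).2 hH) hα S⟩
end

section
/- Let C be a small category equipped with a Grothendieck topology J, let ι be a small type, let (Uᵢ)_{i : ι} be objects of C, let X be an object of C, and let fᵢ : Uᵢ ⟶ X be a family of morphisms. Then the sieve generated by the presieve of the fᵢ is a J-covering sieve on X if and only if the induced morphism ∐ᵢ a(y(Uᵢ)) ⟶ a(y(X)) in Sheaf J (Type u) is an epimorphism, where y is the Yoneda embedding and a = presheafToSheaf J (Type u) is sheafification. -/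
/-!
Statement 6: For a small category `C` with a Grothendieck topology `J`, a small family of
morphisms `fᵢ : Uᵢ ⟶ X` generates a `J`-covering sieve on `X` if and only if the induced
morphism `∐ᵢ a(y(Uᵢ)) ⟶ a(y(X))` of sheafified representables is an epimorphism in
`Sheaf J (Type u)`.
-/

open CategoryTheory Limits Opposite

universe u

instance statement6_hasCoproduct {C : Type u} [SmallCategory C] (J : GrothendieckTopology C)
    {ι : Type u} (F : ι → Sheaf J (Type u)) : HasCoproduct F :=
  @HasColimitsOfShape.has_colimit _ _ _ _ Sheaf.instHasColimitsOfShape _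

section Aux

variable {C : Type u} [SmallCategory C] (J : GrothendieckTopology C)
    {ι : Type u} (U : ι → C) (X : C) (f : ∀ i, U i ⟶ X)

/-- The image sieve of the presheaf-level `Sigma.desc` is the pullback of the generated sieve. -/
lemma aux_imageSieve {V : C} (s : (yoneda.obj X).obj (op V)) :
    Presheaf.imageSieve (Sigma.desc fun i => yoneda.map (f i)) s =
      (Sieve.generate (Presieve.ofArrows U f)).pullback s := by
  ext W h
  constructor
  · rintro ⟨t, ht⟩
    obtain ⟨⟨i⟩, k, hk⟩ := Types.jointly_surjective_of_isColimit
      (isColimitOfPreserves ((evaluation Cᵒᵖ (Type u)).obj (op W))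
        (colimit.isColimit (Discrete.functor fun i => yoneda.obj (U i)))) t
    refine ⟨U i, k, f i, Presieve.ofArrows.mk i, ?_⟩
    have h1 := ConcreteCategory.congr_hom (congr_app
      (Sigma.ι_desc (f := fun i => yoneda.obj (U i)) (fun i => yoneda.map (f i)) i) (op W)) k
    exact h1.symm.trans
      ((congrArg ((Sigma.desc fun i => yoneda.map (f i)).app (op W)) hk).trans ht)
  · rintro ⟨Y, l, g, hg, fac⟩
    cases hg with
    | mk i =>
      refine ⟨(Sigma.ι (fun i => yoneda.obj (U i)) i).app (op W) l, ?_⟩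
      have h1 := ConcreteCategory.congr_hom (congr_app
        (Sigma.ι_desc (f := fun i => yoneda.obj (U i)) (fun i => yoneda.map (f i)) i) (op W)) l
      exact h1.trans fac

lemma aux_locallySurjective :
    Presheaf.IsLocallySurjective J (Sigma.desc fun i => yoneda.map (f i)) ↔
      Sieve.generate (Presieve.ofArrows U f) ∈ J X := by
  constructor
  · intro h
    have := h.imageSieve_mem (𝟙 X : (yoneda.obj X).obj (op X))
    rwa [aux_imageSieve, Sieve.pullback_id] at this
  · intro hS
    exact ⟨fun {V} s => by rw [aux_imageSieve]; exact J.pullback_stable s hS⟩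

end Aux

theorem statement6 {C : Type u} [SmallCategory C] (J : GrothendieckTopology C)
    {ι : Type u} (U : ι → C) (X : C) (f : ∀ i, U i ⟶ X) :
    Sieve.generate (Presieve.ofArrows U f) ∈ J X ↔
      Epi (Limits.Sigma.desc fun i => (presheafToSheaf J (Type u)).map (yoneda.map (f i))) := by
  have hpc : PreservesColimitsOfSize.{u, u} (presheafToSheaf J (Type u)) :=
    (sheafificationAdjunction J (Type u)).leftAdjoint_preservesColimits
  have e : (Sigma.desc fun i => (presheafToSheaf J (Type u)).map (yoneda.map (f i))) =
      sigmaComparison (presheafToSheaf J (Type u)) (fun i => yoneda.obj (U i)) ≫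
        (presheafToSheaf J (Type u)).map (Sigma.desc fun i => yoneda.map (f i)) :=
    (sigmaComparison_map_desc _ _ _ _).symm
  have : IsIso (sigmaComparison (presheafToSheaf J (Type u)) (fun i => yoneda.obj (U i))) :=
    inferInstance
  rw [e]
  rw [← aux_locallySurjective J U X f,
    ← Presheaf.isLocallySurjective_presheafToSheaf_map_iff J,
    ← Sheaf.isLocallySurjective_iff_epi]
  constructor
  · intro h
    infer_instance
  · intro h
    rw [← Sheaf.isLocallySurjective_sheafToPresheaf_map_iff, Functor.map_comp,
      Presheaf.comp_isLocallySurjective_iff,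
      Sheaf.isLocallySurjective_sheafToPresheaf_map_iff] at h
    exact h
end

section
/- Let C be a small category with a Grothendieck topology J and let X = Sheaf J (Type u) be the associated Grothendieck topos. Then for every object Y of X and every sieve S on Y, S is a covering sieve for the canonical topology on X (Mathlib's canonicalTopology, the finest Grothendieck topology for which every representable presheaf is a sheaf) if and only if S is effectively epimorphic. -/
/-!
Statement 7: For a Grothendieck topos `X = Sheaf J (Type u)`, a sieve `S` on an object `Y`
is a covering sieve for the canonical topology on `X` if and only if `S` is effectively
epimorphic.
-/

open CategoryTheory Limits

universe u

namespace Statement7Aux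

open Opposite

variable {C : Type u} [SmallCategory C] {J : GrothendieckTopology C}

variable {Y Z₁ Z₂ : Sheaf J (Type u)}

/-- Explicit pullback presheaf of two sheaf morphisms. -/
def pbPresheaf (f₁ : Z₁ ⟶ Y) (f₂ : Z₂ ⟶ Y) : Cᵒᵖ ⥤ Type u where
  obj c := {p : Z₁.val.obj c × Z₂.val.obj c // f₁.hom.app c p.1 = f₂.hom.app c p.2}
  map h := TypeCat.ofHom fun p => ⟨⟨Z₁.val.map h p.val.1, Z₂.val.map h p.val.2⟩, by
    rw [FunctorToTypes.naturality, FunctorToTypes.naturality, p.2]⟩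
  map_id c := by refine ConcreteCategory.hom_ext _ _ (fun p => ?_); apply Subtype.ext; simp
  map_comp h h' := by refine ConcreteCategory.hom_ext _ _ (fun p => ?_); apply Subtype.ext; simp

lemma pb_isSheaf (f₁ : Z₁ ⟶ Y) (f₂ : Z₂ ⟶ Y) : Presheaf.IsSheaf J (pbPresheaf f₁ f₂) := by
  rw [isSheaf_iff_isSheaf_of_type]
  intro c R hR x hx
  have h1 := ((isSheaf_iff_isSheaf_of_type J _).1 Z₁.cond) R hR
  have h2 := ((isSheaf_iff_isSheaf_of_type J _).1 Z₂.cond) R hR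
  have hY := ((isSheaf_iff_isSheaf_of_type J _).1 Y.cond) R hR
  let x₁ : Presieve.FamilyOfElements Z₁.val (R : Presieve c) := fun _ g hg => (Subtype.val (x g hg)).1
  let x₂ : Presieve.FamilyOfElements Z₂.val (R : Presieve c) := fun _ g hg => (Subtype.val (x g hg)).2
  have hx₁ : x₁.Compatible := fun _ _ _ g₁ g₂ u₁ u₂ hu₁ hu₂ w =>
    congrArg (fun p => (Subtype.val p).1) (hx g₁ g₂ hu₁ hu₂ w)
  have hx₂ : x₂.Compatible := fun _ _ _ g₁ g₂ u₁ u₂ hu₁ hu₂ w =>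
    congrArg (fun p => (Subtype.val p).2) (hx g₁ g₂ hu₁ hu₂ w)
  have key : f₁.hom.app (op c) (h1.amalgamate x₁ hx₁) =
      f₂.hom.app (op c) (h2.amalgamate x₂ hx₂) := by
    apply hY.isSeparatedFor.ext
    intro d g hg
    rw [← FunctorToTypes.naturality, ← FunctorToTypes.naturality,
      h1.valid_glue hx₁ g hg, h2.valid_glue hx₂ g hg]
    exact (x g hg).2
  refine ⟨⟨⟨h1.amalgamate x₁ hx₁, h2.amalgamate x₂ hx₂⟩, key⟩, ?_, ?_⟩
  · intro d g hg
    apply Subtype.ext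
    exact Prod.ext (h1.valid_glue hx₁ g hg) (h2.valid_glue hx₂ g hg)
  · intro u hu
    apply Subtype.ext
    refine Prod.ext ?_ ?_
    · exact h1.isSeparatedFor x₁ _ _ (fun d g hg => congrArg (fun p => (Subtype.val p).1) (hu g hg))
        (h1.isAmalgamation hx₁)
    · exact h2.isSeparatedFor x₂ _ _ (fun d g hg => congrArg (fun p => (Subtype.val p).2) (hu g hg))
        (h2.isAmalgamation hx₂)

/-- The pullback sheaf. -/
def pbSheaf (f₁ : Z₁ ⟶ Y) (f₂ : Z₂ ⟶ Y) : Sheaf J (Type u) :=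
  ⟨pbPresheaf f₁ f₂, pb_isSheaf f₁ f₂⟩

/-- First projection. -/
def pbFst (f₁ : Z₁ ⟶ Y) (f₂ : Z₂ ⟶ Y) : pbSheaf f₁ f₂ ⟶ Z₁ :=
  ⟨{ app := fun c => TypeCat.ofHom fun p => (Subtype.val p).1, naturality := fun _ _ _ => rfl }⟩

/-- Second projection. -/
def pbSnd (f₁ : Z₁ ⟶ Y) (f₂ : Z₂ ⟶ Y) : pbSheaf f₁ f₂ ⟶ Z₂ :=
  ⟨{ app := fun c => TypeCat.ofHom fun p => (Subtype.val p).2, naturality := fun _ _ _ => rfl }⟩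

lemma pb_comm (f₁ : Z₁ ⟶ Y) (f₂ : Z₂ ⟶ Y) : pbFst f₁ f₂ ≫ f₁ = pbSnd f₁ f₂ ≫ f₂ := by
  apply Sheaf.hom_ext
  ext c p
  exact Subtype.property p

/-- A factorization of an element `z ∈ Y(c')` through a morphism belonging to `S`. -/
structure Fac {Y : Sheaf J (Type u)} (S : Sieve Y) {c' : C} (z : Y.val.obj (op c')) where
  Z : Sheaf J (Type u)
  f : Z ⟶ Y
  hf : S f
  t : Z.val.obj (op c')
  w : f.hom.app (op c') t = z

variable {Y : Sheaf J (Type u)}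

/-- The sieve of arrows along which `y` lifts locally through `S`. -/
def locSieve (S : Sieve Y) {c : C} (y : Y.val.obj (op c)) : Sieve c where
  arrows c' g := Nonempty (Fac S (Y.val.map g.op y))
  downward_closed := by
    rintro c' c'' g ⟨F⟩ h
    exact ⟨⟨F.Z, F.f, F.hf, F.Z.val.map h.op F.t, by
      rw [FunctorToTypes.naturality, F.w, ← FunctorToTypes.map_comp_apply, ← op_comp]⟩⟩

/-- `S` is locally (jointly) surjective. -/
def LocSurj (S : Sieve Y) : Prop :=
  ∀ (c : C) (y : Y.val.obj (op c)), locSieve S y ∈ J c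

lemma locSurj_pullback {S : Sieve Y} (hS : LocSurj S) {Z : Sheaf J (Type u)} (f : Z ⟶ Y) :
    LocSurj (S.pullback f) := by
  intro c z
  refine J.superset_covering ?_ (hS c (f.hom.app (op c) z))
  rintro c' g ⟨F⟩
  refine ⟨⟨pbSheaf F.f f, pbSnd F.f f, ?_, ⟨⟨F.t, Z.val.map g.op z⟩, ?_⟩, rfl⟩⟩
  · show S (pbSnd F.f f ≫ f)
    rw [← pb_comm]
    exact S.downward_closed F.hf _
  · rw [F.w, FunctorToTypes.naturality]

/-- The key independence lemma. -/
lemma key {S : Sieve Y} {W : Sheaf J (Type u)}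
    {x : Presieve.FamilyOfElements (yoneda.obj W) (S : Presieve Y)}
    (hx : x.Compatible) {Z₁ Z₂ : Sheaf J (Type u)} {f₁ : Z₁ ⟶ Y} {f₂ : Z₂ ⟶ Y}
    (hf₁ : S f₁) (hf₂ : S f₂) {c : Cᵒᵖ} (t₁ : Z₁.val.obj c) (t₂ : Z₂.val.obj c)
    (h : f₁.hom.app c t₁ = f₂.hom.app c t₂) :
    (x f₁ hf₁).hom.app c t₁ = (x f₂ hf₂).hom.app c t₂ := by
  have hcomp : pbFst f₁ f₂ ≫ x f₁ hf₁ = pbSnd f₁ f₂ ≫ x f₂ hf₂ :=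
    hx (pbFst f₁ f₂) (pbSnd f₁ f₂) hf₁ hf₂ (pb_comm f₁ f₂)
  exact types_congr_hom (congrArg (fun (q : pbSheaf f₁ f₂ ⟶ W) => q.hom.app c) hcomp)
    (Subtype.mk (⟨t₁, t₂⟩ : Z₁.val.obj c × Z₂.val.obj c) h : (pbSheaf f₁ f₂).val.obj c)

lemma fac_key {S : Sieve Y} {W : Sheaf J (Type u)}
    {x : Presieve.FamilyOfElements (yoneda.obj W) (S : Presieve Y)}
    (hx : x.Compatible) {c' : C} {z : Y.val.obj (op c')} (F F' : Fac S z) :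
    (x F.f F.hf).hom.app (op c') F.t = (x F'.f F'.hf).hom.app (op c') F'.t :=
  key hx F.hf F'.hf F.t F'.t (by rw [F.w, F'.w])

section Main

variable {S : Sieve Y} {W : Sheaf J (Type u)}
  {x : Presieve.FamilyOfElements (yoneda.obj W) (S : Presieve Y)}

/-- The family of elements of `W` induced on the local-factorization sieve. -/
noncomputable def fam (x : Presieve.FamilyOfElements (yoneda.obj W) (S : Presieve Y))
    {c : C} (y : Y.val.obj (op c)) :
    Presieve.FamilyOfElements W.val (locSieve S y : Presieve c) :=
  fun c' _ hg => (x hg.some.f hg.some.hf).hom.app (op c') hg.some.t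

lemma fam_compatible (hx : x.Compatible) {c : C} (y : Y.val.obj (op c)) :
    (fam x y).Compatible := by
  intro d₁ d₂ e g₁ g₂ u₁ u₂ hu₁ hu₂ w
  dsimp [fam]
  rw [← FunctorToTypes.naturality, ← FunctorToTypes.naturality]
  refine key hx hu₁.some.hf hu₂.some.hf _ _ ?_
  rw [FunctorToTypes.naturality, FunctorToTypes.naturality, hu₁.some.w, hu₂.some.w,
    ← FunctorToTypes.map_comp_apply, ← FunctorToTypes.map_comp_apply, ← op_comp, ← op_comp, w]

variable (hS : LocSurj S)

/-- Glue the family along a covering sieve of local factorizations. -/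
noncomputable def glue (hx : x.Compatible) {c : C} (y : Y.val.obj (op c)) : W.val.obj (op c) :=
  (((isSheaf_iff_isSheaf_of_type J _).1 W.cond) _ (hS c y)).amalgamate
    (fam x y) (fam_compatible hx y)

lemma glue_spec (hx : x.Compatible) {c : C} (y : Y.val.obj (op c)) {c' : C} (g : c' ⟶ c)
    (F : Fac S (Y.val.map g.op y)) :
    W.val.map g.op (glue hS hx y) = (x F.f F.hf).hom.app (op c') F.t := by
  have hg : locSieve S y g := ⟨F⟩
  exact ((((isSheaf_iff_isSheaf_of_type J _).1 W.cond) _ (hS c y)).valid_glue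
    (fam_compatible hx y) g hg).trans (fac_key hx hg.some F)

lemma glue_natural (hx : x.Compatible) {c : C} (y : Y.val.obj (op c)) {c' : C} (h : c' ⟶ c) :
    glue hS hx (Y.val.map h.op y) = W.val.map h.op (glue hS hx y) := by
  apply (((isSheaf_iff_isSheaf_of_type J _).1 W.cond) _
    (hS c' (Y.val.map h.op y))).isSeparatedFor.ext
  intro d g hg
  obtain ⟨Z', f', hf', t', w'⟩ := hg.some
  have hr : W.val.map g.op (W.val.map h.op (glue hS hx y)) =
      (x f' hf').hom.app (op d) t' := by
    rw [← FunctorToTypes.map_comp_apply, ← op_comp]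
    exact glue_spec hS hx y (g ≫ h)
      ⟨Z', f', hf', t', by rw [w', op_comp, FunctorToTypes.map_comp_apply]⟩
  exact (glue_spec hS hx _ g ⟨Z', f', hf', t', w'⟩).trans hr.symm

/-- The descended morphism. -/
noncomputable def desc (hx : x.Compatible) : Y ⟶ W :=
  ⟨{ app := fun c => TypeCat.ofHom fun y => glue hS hx (c := c.unop) y
     naturality := fun c c' h => by
       refine ConcreteCategory.hom_ext _ _ (fun y => ?_)
       exact glue_natural hS hx (c := c.unop) y h.unop }⟩

end Main

lemma isSheafFor_of_locSurj {S : Sieve Y} (hS : LocSurj S) (W : Sheaf J (Type u)) :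
    Presieve.IsSheafFor (yoneda.obj W) (S : Presieve Y) := by
  intro x hx
  refine ⟨desc hS hx, ?_, ?_⟩
  · intro Z f hf
    show f ≫ desc hS hx = x f hf
    apply Sheaf.hom_ext
    ext c z
    show glue hS hx (c := c.unop) (f.hom.app c z) = (x f hf).hom.app c z
    apply (((isSheaf_iff_isSheaf_of_type J _).1 W.cond) _
      (hS c.unop (f.hom.app c z))).isSeparatedFor.ext
    intro d g hg
    exact (glue_spec hS hx (f.hom.app c z) g
        ⟨Z, f, hf, Z.val.map g.op z, NatTrans.naturality_apply f.hom g.op z⟩).trans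
      (NatTrans.naturality_apply (x f hf).hom g.op z)
  · intro m hm
    apply Sheaf.hom_ext
    ext c y
    show m.hom.app c y = glue hS hx (c := c.unop) y
    apply (((isSheaf_iff_isSheaf_of_type J _).1 W.cond) _
      (hS c.unop y)).isSeparatedFor.ext
    intro d g hg
    have F := hg.some
    have h1 : W.val.map g.op (m.hom.app c y) = m.hom.app (op d) (Y.val.map g.op y) :=
      (NatTrans.naturality_apply m.hom g.op y).symm
    have h2 : m.hom.app (op d) (Y.val.map g.op y) =
        m.hom.app (op d) (F.f.hom.app (op d) F.t) := congrArg _ F.w.symm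
    have h3 : m.hom.app (op d) (F.f.hom.app (op d) F.t) =
        (x F.f F.hf).hom.app (op d) F.t :=
      types_congr_hom (congrArg (fun (q : F.Z ⟶ W) => q.hom.app (op d)) (hm F.f F.hf)) F.t
    rw [glue_spec hS hx _ g F]
    exact h1.trans (h2.trans h3)

section Sub

/-- The subpresheaf of `Y` of sections which locally factor through `S`. -/
def Tpre (S : Sieve Y) : Cᵒᵖ ⥤ Type u where
  obj c := {y : Y.val.obj c // locSieve S (c := c.unop) y ∈ J c.unop}
  map {c c'} h := TypeCat.ofHom fun p => ⟨Y.val.map h p.val, by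
    refine J.superset_covering ?_ (J.pullback_stable h.unop p.2)
    rintro d g ⟨F⟩
    exact ⟨⟨F.Z, F.f, F.hf, F.t, by
      rw [F.w, op_comp, FunctorToTypes.map_comp_apply, Quiver.Hom.op_unop]⟩⟩⟩
  map_id c := by
    refine ConcreteCategory.hom_ext _ _ (fun p => ?_)
    apply Subtype.ext
    simp
  map_comp h h' := by
    refine ConcreteCategory.hom_ext _ _ (fun p => ?_)
    apply Subtype.ext
    simp

lemma Tpre_isSheaf (S : Sieve Y) : Presheaf.IsSheaf J (Tpre S) := by
  rw [isSheaf_iff_isSheaf_of_type]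
  intro c R hR x hx
  have hY := ((isSheaf_iff_isSheaf_of_type J _).1 Y.cond) R hR
  let x₀ : Presieve.FamilyOfElements Y.val (R : Presieve c) := fun _ g hg => Subtype.val (x g hg)
  have hx₀ : x₀.Compatible := fun _ _ _ g₁ g₂ u₁ u₂ hu₁ hu₂ w =>
    congrArg Subtype.val (hx g₁ g₂ hu₁ hu₂ w)
  have hmem : locSieve S (hY.amalgamate x₀ hx₀) ∈ J c := by
    refine J.transitive hR _ (fun d g hg => J.superset_covering ?_ (Subtype.property (x g hg)))
    rintro e k ⟨F⟩
    refine ⟨⟨F.Z, F.f, F.hf, F.t, ?_⟩⟩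
    rw [F.w, op_comp, FunctorToTypes.map_comp_apply]
    rw [hY.valid_glue hx₀ g hg]
  refine ⟨⟨hY.amalgamate x₀ hx₀, hmem⟩, ?_, ?_⟩
  · intro d g hg
    apply Subtype.ext
    exact hY.valid_glue hx₀ g hg
  · intro u hu
    apply Subtype.ext
    exact hY.isSeparatedFor x₀ _ _ (fun d g hg => congrArg Subtype.val (hu g hg))
      (hY.isAmalgamation hx₀)

/-- The image subsheaf. -/
def TSheaf (S : Sieve Y) : Sheaf J (Type u) := ⟨Tpre S, Tpre_isSheaf S⟩

/-- Inclusion of the image subsheaf. -/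
def Tι (S : Sieve Y) : TSheaf S ⟶ Y :=
  ⟨{ app := fun _ => TypeCat.ofHom fun p => Subtype.val p, naturality := fun _ _ _ => rfl }⟩

/-- Lift of a morphism in `S` through the image subsheaf. -/
def Tlift (S : Sieve Y) {Z : Sheaf J (Type u)} (f : Z ⟶ Y) (hf : S f) : Z ⟶ TSheaf S :=
  ⟨{ app := fun c => TypeCat.ofHom fun z => ⟨f.hom.app c z, by
      refine J.superset_covering (fun d g _ => ?_) (J.top_mem c.unop)
      exact ⟨⟨Z, f, hf, Z.val.map g.op z, NatTrans.naturality_apply f.hom g.op z⟩⟩⟩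
     naturality := fun c c' h => by
      refine ConcreteCategory.hom_ext _ _ (fun z => ?_)
      apply Subtype.ext
      exact NatTrans.naturality_apply f.hom h z }⟩

lemma locSurj_of_forallYoneda (S : Sieve Y)
    (H : ∀ W : Sheaf J (Type u), Presieve.IsSheafFor (yoneda.obj W) (S : Presieve Y)) :
    LocSurj S := by
  let x : Presieve.FamilyOfElements (yoneda.obj (TSheaf S)) (S : Presieve Y) :=
    fun _ f hf => Tlift S f hf
  have hx : x.Compatible := by
    intro Z₁ Z₂ P g₁ g₂ f₁ f₂ h₁ h₂ w
    show g₁ ≫ Tlift S f₁ h₁ = g₂ ≫ Tlift S f₂ h₂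
    apply Sheaf.hom_ext
    ext c p
    apply Subtype.ext
    exact types_congr_hom (congrArg (fun (q : P ⟶ Y) => q.hom.app c) w) p
  obtain ⟨d, hd, -⟩ := H (TSheaf S) x hx
  let x₀ : Presieve.FamilyOfElements (yoneda.obj Y) (S : Presieve Y) := fun _ f _ => f
  have hYx : x₀.Compatible := fun _ _ _ _ _ _ _ _ _ w => w
  obtain ⟨e, -, hu⟩ := H Y x₀ hYx
  have h2 : d ≫ Tι S = e := by
    refine hu _ (fun Z f hf => ?_)
    have hfd : f ≫ d = Tlift S f hf := hd f hf
    show f ≫ d ≫ Tι S = f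
    rw [← Category.assoc, hfd]
    apply Sheaf.hom_ext
    rfl
  have h1 : (𝟙 Y : Y ⟶ Y) = e := hu (𝟙 Y) (fun Z f hf => Category.comp_id f)
  have h3 : d ≫ Tι S = 𝟙 Y := h2.trans h1.symm
  intro c y
  have h4 : Subtype.val (d.hom.app (op c) y) = y :=
    types_congr_hom (congrArg (fun (q : Y ⟶ Y) => q.hom.app (op c)) h3) y
  have h5 := Subtype.property (d.hom.app (op c) y)
  rwa [h4] at h5

end Sub

end Statement7Aux


theorem statement7 {C : Type u} [SmallCategory C] (J : GrothendieckTopology C)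
    (Y : Sheaf J (Type u)) (S : Sieve Y) :
    S ∈ Sheaf.canonicalTopology (Sheaf J (Type u)) Y ↔ S.EffectiveEpimorphic := by
  constructor
  · intro hS
    rw [Sieve.EffectiveEpimorphic, ← Sieve.forallYonedaIsSheaf_iff_colimit]
    intro W
    have h := (GrothendieckTopology.mem_sInf _ S).1 hS
      (Sheaf.finestTopologySingle (yoneda.obj W)) ⟨yoneda.obj W, ⟨W, rfl⟩, rfl⟩
    have h2 := h Y (𝟙 Y)
    rwa [Sieve.pullback_id] at h2
  · intro hS
    have h1 : ∀ W, Presieve.IsSheafFor (yoneda.obj W) (S : Presieve Y) :=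
      (Sieve.forallYonedaIsSheaf_iff_colimit S).2 hS
    have h2 : Statement7Aux.LocSurj S := Statement7Aux.locSurj_of_forallYoneda S h1
    refine (GrothendieckTopology.mem_sInf _ S).2 ?_
    rintro t ⟨P, ⟨W, rfl⟩, rfl⟩
    intro Z f
    exact Statement7Aux.isSheafFor_of_locSurj (Statement7Aux.locSurj_pullback h2 f) W
end

section
/- Let C be a small category with a Grothendieck topology J and let X = Sheaf J (Type u) be the associated Grothendieck topos. A presheaf F : Xᵒᵖ ⥤ Type u is a sheaf for the canonical topology on X if and only if F is representable. -/
open CategoryTheory Limits Opposite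

universe u

namespace Statement9Aux

variable {C : Type u} [SmallCategory C] (J : GrothendieckTopology C)

/-- The composite of the Yoneda embedding with sheafification. -/
noncomputable def G : C ⥤ Sheaf J (Type u) := yoneda ⋙ presheafToSheaf J (Type u)

/-- Morphisms out of sheafified representables are sections. -/
noncomputable def e {c : C} (Z : Sheaf J (Type u)) : ((G J).obj c ⟶ Z) ≃ Z.val.obj (op c) :=
  ((sheafificationAdjunction J (Type u)).homEquiv (yoneda.obj c) Z).trans yonedaEquiv

lemma e_comp {c : C} {Z Z' : Sheaf J (Type u)} (x : (G J).obj c ⟶ Z) (t : Z ⟶ Z') :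
    e J Z' (x ≫ t) = t.hom.app (op c) (e J Z x) := by
  change yonedaEquiv ((sheafificationAdjunction J (Type u)).homEquiv (yoneda.obj c) Z' (x ≫ t)) =
    t.hom.app (op c) (yonedaEquiv ((sheafificationAdjunction J (Type u)).homEquiv (yoneda.obj c) Z x))
  erw [(sheafificationAdjunction J (Type u)).homEquiv_naturality_right x t, yonedaEquiv_comp]

lemma e_map {c c' : C} (g : c' ⟶ c) {Z : Sheaf J (Type u)} (x : (G J).obj c ⟶ Z) :
    e J Z ((G J).map g ≫ x) = Z.val.map g.op (e J Z x) := by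
  change yonedaEquiv ((sheafificationAdjunction J (Type u)).homEquiv (yoneda.obj c') Z ((G J).map g ≫ x)) =
    Z.val.map g.op (yonedaEquiv ((sheafificationAdjunction J (Type u)).homEquiv (yoneda.obj c) Z x))
  erw [(sheafificationAdjunction J (Type u)).homEquiv_naturality_left (yoneda.map g) x,
    ← yonedaEquiv_naturality]
  rfl

lemma e_symm_map {c c' : C} (g : c' ⟶ c) {Z : Sheaf J (Type u)} (ξ : Z.val.obj (op c)) :
    (e J Z).symm (Z.val.map g.op ξ) = (G J).map g ≫ (e J Z).symm ξ := by
  apply (e J Z).injective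
  rw [Equiv.apply_symm_apply, e_map, Equiv.apply_symm_apply]

lemma e_G_map {c' U : C} (α : c' ⟶ U) :
    e J ((G J).obj U) ((G J).map α) = (toSheafify J (yoneda.obj U)).app (op c') α := by
  change yonedaEquiv ((sheafificationAdjunction J (Type u)).homEquiv (yoneda.obj c') ((G J).obj U) ((G J).map α)) = _
  erw [show (G J).map α = (presheafToSheaf J (Type u)).map (yoneda.map α) ≫ 𝟙 _ from
      (Category.comp_id _).symm,
    (sheafificationAdjunction J (Type u)).homEquiv_naturality_left (yoneda.map α) (𝟙 _),
    Adjunction.homEquiv_id, yonedaEquiv_comp, yonedaEquiv_yoneda_map]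
  rfl

variable {X : Sheaf J (Type u)}

/-- The sieve of arrows along which `x` locally factors through `R`. -/
def lsieve (R : Sieve X) {c : C} (x : (G J).obj c ⟶ X) : Sieve c where
  arrows c' g := ∃ (W : Sheaf J (Type u)) (f : W ⟶ X) (w : (G J).obj c' ⟶ W),
    R f ∧ w ≫ f = (G J).map g ≫ x
  downward_closed := by
    rintro c' c'' g ⟨W, f, w, hf, hw⟩ h
    exact ⟨W, f, (G J).map h ≫ w, hf, by
      rw [Category.assoc, hw, ← Category.assoc, ← Functor.map_comp]⟩

/-- A sieve is "locally surjective" if every section of `X` locally factors through it. -/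
def IsLS (R : Sieve X) : Prop := ∀ (c : C) (x : (G J).obj c ⟶ X), lsieve J R x ∈ J c

lemma IsLS.pullback_stable {R : Sieve X} (hR : IsLS J R) {Y : Sheaf J (Type u)} (h : Y ⟶ X) :
    IsLS J (R.pullback h) := by
  intro c x
  refine J.superset_covering ?_ (hR c (x ≫ h))
  rintro c' g ⟨W, f, w, hf, hw⟩
  refine ⟨Limits.pullback f h, Limits.pullback.snd f h,
    Limits.pullback.lift w ((G J).map g ≫ x) (by rw [hw, Category.assoc]), ?_,
    Limits.pullback.lift_snd _ _ _⟩
  show R (Limits.pullback.snd f h ≫ h)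
  rw [← Limits.pullback.condition]
  exact R.downward_closed hf _

lemma isSheafFor_yoneda_of_isLS {R : Sieve X} (hR : IsLS J R) (Z : Sheaf J (Type u)) :
    Presieve.IsSheafFor (yoneda.obj Z) (R : Presieve X) := by
  have hZ : Presieve.IsSheaf J Z.val := (isSheaf_iff_isSheaf_of_type J Z.val).1 Z.cond
  intro u hu
  -- well-definedness of local values
  have key : ∀ {c' : C} {W W' : Sheaf J (Type u)} (f : W ⟶ X) (f' : W' ⟶ X) (hf : R f)
      (hf' : R f') (w : (G J).obj c' ⟶ W) (w' : (G J).obj c' ⟶ W'), w ≫ f = w' ≫ f' →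
      w ≫ u f hf = w' ≫ u f' hf' := fun f f' hf hf' w w' hcomm => hu w w' hf hf' hcomm
  -- the family of local values
  let famval : ∀ {c : C} (x : (G J).obj c ⟶ X), Presieve.FamilyOfElements Z.val (lsieve J R x : Presieve c) :=
    fun x c' g hg =>
      e J Z (hg.choose_spec.choose_spec.choose ≫
        u hg.choose_spec.choose hg.choose_spec.choose_spec.choose_spec.1)
  have fam_spec : ∀ {c : C} (x : (G J).obj c ⟶ X) {c' : C} (g : c' ⟶ c)
      (hg : lsieve J R x g) {W : Sheaf J (Type u)} (f : W ⟶ X) (hf : R f)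
      (w : (G J).obj c' ⟶ W) (hw : w ≫ f = (G J).map g ≫ x),
      famval x g hg = e J Z (w ≫ u f hf) := by
    intro c x c' g hg W f hf w hw
    exact congrArg (e J Z) (key _ _ _ hf _ w
      (hg.choose_spec.choose_spec.choose_spec.2.trans hw.symm))
  have fam_compat : ∀ {c : C} (x : (G J).obj c ⟶ X), (famval x).Compatible := by
    intro c x
    rw [Presieve.compatible_iff_sieveCompatible]
    intro c' c'' g h hg
    obtain ⟨W, f, w, hf, hw⟩ := hg
    rw [fam_spec x g ⟨W, f, w, hf, hw⟩ f hf w hw,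
      fam_spec x (h ≫ g) _ f hf ((G J).map h ≫ w)
        (by rw [Category.assoc, hw, ← Category.assoc, ← Functor.map_comp]),
      ← e_map]
    rw [Category.assoc]
  -- glued sections
  have glue : ∀ (c : C) (x : (G J).obj c ⟶ X), ∃ z : Z.val.obj (op c),
      ∀ {c' : C} (g : c' ⟶ c) {W : Sheaf J (Type u)} (f : W ⟶ X) (hf : R f)
        (w : (G J).obj c' ⟶ W) (_ : w ≫ f = (G J).map g ≫ x),
        Z.val.map g.op z = e J Z (w ≫ u f hf) := by
    intro c x
    refine ⟨(hZ _ (hR c x)).amalgamate _ (fam_compat x), ?_⟩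
    intro c' g W f hf w hw
    have hg : lsieve J R x g := ⟨W, f, w, hf, hw⟩
    rw [(hZ _ (hR c x)).valid_glue (fam_compat x) g hg]
    exact fam_spec x g hg f hf w hw
  choose zfun hz using glue
  -- separation
  have sep : ∀ {c : C} (S : Sieve c), S ∈ J c → ∀ (z z' : Z.val.obj (op c)),
      (∀ {c' : C} (g : c' ⟶ c), S g → Z.val.map g.op z = Z.val.map g.op z') → z = z' := by
    intro c S hS z z' h
    exact (hZ S hS).isSeparatedFor.ext (fun Y g hg => h g hg)
  -- the amalgamation
  let tapp : ∀ (c : Cᵒᵖ), X.val.obj c → Z.val.obj c := fun c ξ =>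
    zfun c.unop ((e J X).symm ξ)
  have tnat : ∀ {c c' : C} (g : c' ⟶ c) (ξ : X.val.obj (op c)),
      tapp (op c') (X.val.map g.op ξ) = Z.val.map g.op (tapp (op c) ξ) := by
    intro c c' g ξ
    refine sep _ (hR c' ((G J).map g ≫ (e J X).symm ξ)) _ _ ?_
    intro c'' k hk
    obtain ⟨W, f, w, hf, hw⟩ := hk
    have h1 : Z.val.map k.op (tapp (op c') (X.val.map g.op ξ)) = e J Z (w ≫ u f hf) := by
      show Z.val.map k.op (zfun c' ((e J X).symm (X.val.map g.op ξ))) = _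
      rw [e_symm_map]
      exact hz c' _ k f hf w hw
    have h2 : Z.val.map k.op (Z.val.map g.op (tapp (op c) ξ)) = e J Z (w ≫ u f hf) := by
      rw [← FunctorToTypes.map_comp_apply, ← op_comp]
      exact hz c _ (k ≫ g) f hf w (by rw [hw, Functor.map_comp, Category.assoc])
    rw [h1, h2]
  let t : X ⟶ Z := ⟨{
    app := fun c => TypeCat.ofHom (tapp c)
    naturality := by
      intro c c' h
      refine ConcreteCategory.hom_ext _ _ (fun ξ => ?_)
      exact tnat h.unop ξ }⟩
  have amalg_eval : ∀ (s : X ⟶ Z), (∀ {W : Sheaf J (Type u)} (f : W ⟶ X) (hf : R f),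
        f ≫ s = u f hf) →
      ∀ {c c' : C} (ξ : X.val.obj (op c)) (g : c' ⟶ c) {W : Sheaf J (Type u)} (f : W ⟶ X)
        (hf : R f) (w : (G J).obj c' ⟶ W) (_ : w ≫ f = (G J).map g ≫ (e J X).symm ξ),
        Z.val.map g.op (s.hom.app (op c) ξ) = e J Z (w ≫ u f hf) := by
    intro s hs c c' ξ g W f hf w hw
    have := ConcreteCategory.congr_hom (s.hom.naturality g.op) ξ
    dsimp at this
    rw [← this]
    have : s.hom.app (op c') (X.val.map g.op ξ) = e J Z ((e J X).symm (X.val.map g.op ξ) ≫ s) := by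
      rw [e_comp, Equiv.apply_symm_apply]
    rw [this, e_symm_map, ← hw, Category.assoc, hs f hf]
  have tamalg : ∀ {W : Sheaf J (Type u)} (f : W ⟶ X) (hf : R f), f ≫ t = u f hf := by
    intro W f hf
    apply Sheaf.hom_ext
    apply NatTrans.ext
    funext c
    refine ConcreteCategory.hom_ext _ _ (fun ξw => ?_)
    show tapp c (f.hom.app c ξw) = (u f hf).hom.app c ξw
    obtain ⟨c⟩ := c
    have hξ : f.hom.app (op c) ξw = e J X ((e J W).symm ξw ≫ f) := by
      rw [e_comp, Equiv.apply_symm_apply]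
    show zfun c ((e J X).symm (f.hom.app (op c) ξw)) = _
    rw [hξ, Equiv.symm_apply_apply]
    have := hz c ((e J W).symm ξw ≫ f) (𝟙 c) f hf ((e J W).symm ξw)
      (by rw [CategoryTheory.Functor.map_id, Category.id_comp])
    rw [op_id, FunctorToTypes.map_id_apply] at this
    rw [this, e_comp, Equiv.apply_symm_apply]
  refine ⟨t, ?_, ?_⟩
  · intro W f hf
    exact tamalg f hf
  · intro t' ht'
    apply Sheaf.hom_ext
    apply NatTrans.ext
    funext c
    refine ConcreteCategory.hom_ext _ _ (fun ξ => ?_)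
    obtain ⟨c⟩ := c
    refine sep _ (hR c ((e J X).symm ξ)) _ _ ?_
    intro c' g hg
    obtain ⟨W, f, w, hf, hw⟩ := hg
    rw [amalg_eval t' (fun f hf => ht' f hf) ξ g f hf w hw,
      amalg_eval t (fun f hf => tamalg f hf) ξ g f hf w hw]

lemma mem_canonical_of_isLS {R : Sieve X} (hR : IsLS J R) :
    R ∈ Sheaf.canonicalTopology (Sheaf J (Type u)) X := by
  rw [Sheaf.canonicalTopology, Sheaf.finestTopology, GrothendieckTopology.mem_sInf]
  rintro t ⟨P, ⟨Z, rfl⟩, rfl⟩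
  intro Y f
  exact isSheafFor_yoneda_of_isLS J (IsLS.pullback_stable J hR f) Z

/-- The sieve of arrows along which a map into a sheafified representable is
genuinely representable. -/
def repSieve {c U : C} (x : (G J).obj c ⟶ (G J).obj U) : Sieve c where
  arrows c' h := ∃ α : c' ⟶ U, (G J).map h ≫ x = (G J).map α
  downward_closed := by
    rintro c' c'' h ⟨α, hα⟩ k
    exact ⟨k ≫ α, by rw [Functor.map_comp, Category.assoc, hα, ← Functor.map_comp]⟩

lemma repSieve_mem {c U : C} (x : (G J).obj c ⟶ (G J).obj U) : repSieve J x ∈ J c := by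
  have h := Presheaf.imageSieve_mem J (toSheafify J (yoneda.obj U)) (e J _ x)
  refine J.superset_covering ?_ h
  rintro c' g ⟨α, hα⟩
  refine ⟨α, (e J ((G J).obj U)).injective ?_⟩
  rw [e_map, e_G_map]
  exact hα.symm

lemma coverPreserving :
    CoverPreserving J (Sheaf.canonicalTopology (Sheaf J (Type u))) (G J) := by
  constructor
  intro U S hS
  apply mem_canonical_of_isLS
  intro c x
  refine J.transitive (repSieve_mem J x) _ ?_
  rintro c' h ⟨α, hα⟩
  refine J.superset_covering ?_ (J.pullback_stable α hS)
  intro c'' g hg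
  refine ⟨(G J).obj c'', (G J).map (g ≫ α), 𝟙 _,
    Sieve.image_mem_functorPushforward (G J) S hg, ?_⟩
  rw [Category.id_comp, Functor.map_comp, Functor.map_comp, Category.assoc, hα,
    ← Functor.map_comp]

instance : (G J).IsCoverDense (Sheaf.canonicalTopology (Sheaf J (Type u))) := by
  constructor
  intro X
  apply mem_canonical_of_isLS
  intro c x
  refine J.superset_covering (fun c' g _ => ?_) (J.top_mem c)
  exact ⟨(G J).obj c', (G J).map g ≫ x, 𝟙 _, Presieve.in_coverByImage _ _, by simp⟩

instance : (G J).IsLocallyFull (Sheaf.canonicalTopology (Sheaf J (Type u))) := by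
  constructor
  intro U V f
  apply (coverPreserving J).cover_preserve
  refine J.superset_covering ?_ (repSieve_mem J f)
  rintro c' h ⟨α, hα⟩
  exact ⟨α, hα.symm⟩

instance : (G J).IsLocallyFaithful (Sheaf.canonicalTopology (Sheaf J (Type u))) := by
  constructor
  intro U V f₁ f₂ hf
  apply (coverPreserving J).cover_preserve
  have h : (toSheafify J (yoneda.obj V)).app (op U) f₁
      = (toSheafify J (yoneda.obj V)).app (op U) f₂ := by
    rw [← e_G_map, ← e_G_map, hf]
  have h2 := Presheaf.equalizerSieve_mem J (toSheafify J (yoneda.obj V)) f₁ f₂ h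
  refine J.superset_covering ?_ h2
  intro c' g hg
  exact hg

end Statement9Aux

open Statement9Aux in
theorem statement9 {C : Type u} [SmallCategory C] (J : GrothendieckTopology C)
    (F : (Sheaf J (Type u))ᵒᵖ ⥤ Type u) :
    Presieve.IsSheaf (Sheaf.canonicalTopology (Sheaf J (Type u))) F ↔
      F.IsRepresentable := by
  constructor
  · intro hF
    haveI : (G J).IsContinuous J (Sheaf.canonicalTopology (Sheaf J (Type u))) :=
      Functor.IsCoverDense.isContinuous J _ (G J) (coverPreserving J)
    let Fsh : Sheaf (Sheaf.canonicalTopology (Sheaf J (Type u))) (Type u) :=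
      ⟨F, (isSheaf_iff_isSheaf_of_type _ F).2 hF⟩
    have hP : Presheaf.IsSheaf J ((G J).op ⋙ F) := (G J).op_comp_isSheaf J _ Fsh
    let P : Sheaf J (Type u) := ⟨(G J).op ⋙ F, hP⟩
    let Ysh : Sheaf (Sheaf.canonicalTopology (Sheaf J (Type u))) (Type u) :=
      ⟨yoneda.obj P, (isSheaf_iff_isSheaf_of_type _ _).2 (Sheaf.isSheaf_yoneda_obj P)⟩
    have i : (G J).op ⋙ Fsh.val ≅ (G J).op ⋙ Ysh.val := by
      refine NatIso.ofComponents (fun c => (Equiv.toIso (e J P).symm)) ?_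
      intro c c' h
      obtain ⟨c⟩ := c
      obtain ⟨c'⟩ := c'
      refine ConcreteCategory.hom_ext _ _ (fun ξ => ?_)
      exact e_symm_map J (Z := P) h.unop ξ
    have iso2 := Functor.IsCoverDense.Types.presheafIso (G := G J) i
    exact Functor.IsRepresentable.mk' iso2.symm
  · intro hF
    exact Sheaf.isSheaf_of_isRepresentable F
end

section
/- Let C be a small category with a Grothendieck topology J, let D be a category having all u-small limits, and let F : Cᵒᵖ ⥤ D. Let F' : (Cᵒᵖ ⥤ Type u)ᵒᵖ ⥤ D be a pointwise right Kan extension of F along the opposite of the Yoneda embedding yoneda.op : Cᵒᵖ ⥤ (Cᵒᵖ ⥤ Type u)ᵒᵖ. Then F is a J-sheaf (Presheaf.IsSheaf) if and only if for every object X of C and every J-covering sieve S on X, F' maps the opposite of the inclusion S.functorInclusion : S.functor ⟶ yoneda.obj X to an isomorphism in D. -/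
/-!
Statement 10: Let `C` be a small category with a Grothendieck topology `J`, `D` a category
with all `u`-small limits, and `F : Cᵒᵖ ⥤ D`. Let `F'` be a pointwise right Kan extension
of `F` along `yoneda.op`. Then `F` is a `J`-sheaf iff `F'` inverts (the opposite of) the
inclusion `S.functor ⟶ yoneda.obj X` for every `J`-covering sieve `S` on every `X`.
-/

open CategoryTheory Limits

universe w v u

namespace Statement10Aux

open Opposite

variable {C : Type u} [SmallCategory C]

/-- A universe-polymorphic substitute for natural transformations `P ⟶ G` when
`P` and `G` take values in different universes. -/
@[ext]
structure NatFam (P : Cᵒᵖ ⥤ Type u) (G : Cᵒᵖ ⥤ Type w) where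
  app : ∀ (X : Cᵒᵖ), P.obj X → G.obj X
  nat : ∀ (X Y : Cᵒᵖ) (f : X ⟶ Y) (x : P.obj X), app Y (P.map f x) = G.map f (app X x)

/-- Precomposition of a `NatFam` with a genuine natural transformation. -/
def NatFam.comap {P Q : Cᵒᵖ ⥤ Type u} {G : Cᵒᵖ ⥤ Type w} (f : Q ⟶ P) (t : NatFam P G) :
    NatFam Q G where
  app X x := t.app X (f.app X x)
  nat X Y g x := by
    dsimp
    rw [FunctorToTypes.naturality f g x, t.nat]

lemma NatFam.yoneda_app {G : Cᵒᵖ ⥤ Type w} {X : C} (u : NatFam (yoneda.obj X) G)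
    (Y : C) (f : Y ⟶ X) : u.app (op Y) f = G.map f.op (u.app (op X) (𝟙 X)) := by
  have := u.nat (op X) (op Y) f.op (𝟙 X)
  dsimp at this
  rw [← this, Category.comp_id]

/-- The equivalence between `NatFam (yoneda.obj X) G` and `G.obj (op X)`. -/
def natFamYonedaEquiv (G : Cᵒᵖ ⥤ Type w) (X : C) :
    NatFam (yoneda.obj X) G ≃ G.obj (op X) where
  toFun u := u.app (op X) (𝟙 X)
  invFun a :=
    { app := fun Y f => G.map f.op a
      nat := fun Y Z f x => by
        dsimp
        rw [← FunctorToTypes.map_comp_apply] }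
  left_inv u := by
    ext Y f
    exact (u.yoneda_app _ _).symm
  right_inv a := by
    dsimp
    rw [FunctorToTypes.map_id_apply]

/-- The `NatFam` determined by a compatible family of elements on a sieve. -/
def famToNatFam {G : Cᵒᵖ ⥤ Type w} {X : C} (S : Sieve X)
    (x : Presieve.FamilyOfElements G S.arrows) (hx : x.Compatible) :
    NatFam S.functor G where
  app Y p := x p.1 p.2
  nat Y Z f p := by
    dsimp
    exact hx.to_sieveCompatible p.1 f.unop p.2

/-- The universe-polymorphic Yoneda-style sheaf condition. -/
lemma isSheafFor_iff_natFam {G : Cᵒᵖ ⥤ Type w} {X : C} (S : Sieve X) :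
    Presieve.IsSheafFor G S.arrows ↔
      ∀ t : NatFam S.functor G, ∃! u : NatFam (yoneda.obj X) G,
        NatFam.comap S.functorInclusion u = t := by
  constructor
  · intro hG t
    let x : Presieve.FamilyOfElements G S.arrows := fun Y f hf => t.app (op Y) ⟨f, hf⟩
    have compat : x.Compatible := by
      rw [Presieve.compatible_iff_sieveCompatible]
      intro Y Z f g hf
      have := t.nat (op Y) (op Z) g.op ⟨f, hf⟩
      dsimp at this ⊢
      rw [← this]
      rfl
    obtain ⟨a, ha, hau⟩ := hG x compat
    refine ⟨(natFamYonedaEquiv G X).symm a, ?_, ?_⟩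
    · ext Y p
      dsimp [NatFam.comap, natFamYonedaEquiv]
      exact ha p.1 p.2
    · intro u hu
      apply (natFamYonedaEquiv G X).injective
      rw [Equiv.apply_symm_apply]
      apply hau
      intro Y f hf
      dsimp [natFamYonedaEquiv]
      rw [← u.yoneda_app Y f]
      exact congrArg (fun s : NatFam S.functor G => s.app (op Y) ⟨f, hf⟩) hu
  · intro h x hx
    obtain ⟨u, hu, huu⟩ := h (famToNatFam S x hx)
    refine ⟨natFamYonedaEquiv G X u, ?_, ?_⟩
    · intro Y f hf
      have h1 : G.map f.op ((natFamYonedaEquiv G X) u) = u.app (op Y) f :=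
        (u.yoneda_app Y f).symm
      rw [h1]
      exact congrArg (fun s : NatFam S.functor G => s.app (op Y) ⟨f, hf⟩) hu
    · intro a ha
      have h2 : NatFam.comap S.functorInclusion ((natFamYonedaEquiv G X).symm a) =
          famToNatFam S x hx := by
        ext Y p
        dsimp [NatFam.comap, natFamYonedaEquiv, famToNatFam]
        exact ha p.1 p.2
      have h3 := huu _ h2
      rw [← h3, Equiv.apply_symm_apply]

variable {D : Type v} [Category.{w} D]
  {F : Cᵒᵖ ⥤ D} {F' : (Cᵒᵖ ⥤ Type u)ᵒᵖ ⥤ D} (α : yoneda.op ⋙ F' ⟶ F)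

/-- Restriction map `(d ⟶ F'(P)) → NatFam P (Hom(d, F ·))`. -/
def Φ (d : D) (P : Cᵒᵖ ⥤ Type u) (g : d ⟶ F'.obj (op P)) :
    NatFam P (F ⋙ coyoneda.obj (op d)) where
  app X x := g ≫ F'.map (yonedaEquiv.symm x).op ≫ α.app X
  nat X Y f x := by
    dsimp
    rw [yonedaEquiv_symm_map, op_comp, Functor.map_comp]
    have h := α.naturality f
    dsimp at h
    simp only [Category.assoc]
    rw [h]

lemma Φ_naturality (d : D) {P Q : Cᵒᵖ ⥤ Type u} (f : Q ⟶ P) (g : d ⟶ F'.obj (op P)) :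
    Φ α d Q (g ≫ F'.map f.op) = NatFam.comap f (Φ α d P g) := by
  ext X x
  dsimp [Φ, NatFam.comap]
  rw [show yonedaEquiv.symm ((f.app X) x) = yonedaEquiv.symm x ≫ f from
    (yonedaEquiv_symm_naturality_right _ _ _).symm]
  rw [op_comp, Functor.map_comp]
  simp only [Category.assoc]

lemma Φ_bijective (hpt : (Functor.RightExtension.mk F' α).IsPointwiseRightKanExtension)
    (d : D) (P : Cᵒᵖ ⥤ Type u) : Function.Bijective (Φ α d P) := by
  constructor
  · intro g g' h
    apply (hpt (op P)).hom_ext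
    intro y
    have hy := congrArg (fun s => NatFam.app s y.right (yonedaEquiv y.hom.unop)) h
    dsimp [Φ] at hy
    simp only [Equiv.symm_apply_apply, Quiver.Hom.op_unop] at hy
    dsimp
    simp at hy ⊢
    exact hy
  · intro t
    let c : Cone (StructuredArrow.proj (op P) yoneda.op ⋙ F) :=
      { pt := d
        π :=
          { app := fun y => t.app y.right (yonedaEquiv y.hom.unop)
            naturality := fun y₁ y₂ φ => by
              dsimp
              refine (Category.id_comp _).trans ?_
              have hw := congrArg Quiver.Hom.unop (StructuredArrow.w φ)
              dsimp at hw
              have ht := t.nat y₁.right y₂.right φ.right (yonedaEquiv y₁.hom.unop)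
              dsimp at ht
              refine Eq.trans ?_ ht
              rw [← hw]
              congr 1
              exact (yonedaEquiv_naturality y₁.hom.unop φ.right.unop).symm } }
    refine ⟨(hpt (op P)).lift c, ?_⟩
    ext X x
    have hf := (hpt (op P)).fac c (StructuredArrow.mk (yonedaEquiv.symm x).op)
    dsimp [c] at hf
    dsimp [Φ]
    simp only [Equiv.apply_symm_apply] at hf
    exact hf

end Statement10Aux

open Statement10Aux Opposite

theorem statement10 {C : Type u} [SmallCategory C] (J : GrothendieckTopology C)
    {D : Type v} [Category.{w} D] [HasLimitsOfSize.{u, u} D]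
    (F : Cᵒᵖ ⥤ D) (F' : (Cᵒᵖ ⥤ Type u)ᵒᵖ ⥤ D) (α : yoneda.op ⋙ F' ⟶ F)
    (hpt : (Functor.RightExtension.mk F' α).IsPointwiseRightKanExtension) :
    Presheaf.IsSheaf J F ↔
      ∀ (X : C) (S : Sieve X), S ∈ J X → IsIso (F'.map S.functorInclusion.op) := by
  have key : ∀ (d : D) (X : C) (S : Sieve X),
      (Function.Bijective fun (g : d ⟶ F'.obj (op (yoneda.obj X))) =>
        g ≫ F'.map S.functorInclusion.op) ↔
      (∀ t : NatFam S.functor (F ⋙ coyoneda.obj (op d)),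
        ∃! u : NatFam (yoneda.obj X) (F ⋙ coyoneda.obj (op d)),
          NatFam.comap S.functorInclusion u = t) := by
    intro d X S
    rw [← Function.bijective_iff_existsUnique]
    let e₁ := Equiv.ofBijective _ (Φ_bijective α hpt d (yoneda.obj X))
    let e₂ := Equiv.ofBijective _ (Φ_bijective α hpt d S.functor)
    have hcomm : (NatFam.comap (G := F ⋙ coyoneda.obj (op d)) S.functorInclusion)
        = ⇑e₂ ∘ (fun g => g ≫ F'.map S.functorInclusion.op) ∘ ⇑e₁.symm := by
      funext u
      dsimp only [Function.comp]
      show NatFam.comap S.functorInclusion u = Φ α d S.functor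
        (e₁.symm u ≫ F'.map S.functorInclusion.op)
      rw [Φ_naturality α d S.functorInclusion (e₁.symm u)]
      congr 1
      exact (e₁.apply_symm_apply u).symm
    rw [hcomm, Function.Bijective.of_comp_iff' e₂.bijective,
      Function.Bijective.of_comp_iff _ e₁.symm.bijective]
  constructor
  · intro h X S hS
    rw [isIso_iff_yoneda_map_bijective]
    intro d
    rw [key]
    exact (isSheafFor_iff_natFam S).1 (h d S hS)
  · intro h d X S hS
    rw [isSheafFor_iff_natFam S]
    have hiso := h X S hS
    rw [isIso_iff_yoneda_map_bijective] at hiso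
    exact (key d X S).1 (hiso d)
end

section
/- Let C be a category, let W be a class of morphisms of C, and call an object Z of C W-local if for every morphism f : A ⟶ B in W, precomposition with f gives a bijection from Hom(B, Z) to Hom(A, Z). Let X be a W-local object. Then an object g : U ⟶ X of the slice category Over X is local with respect to the class of morphisms φ of Over X whose underlying morphism φ.left lies in W, if and only if U is W-local in C. -/
/-!
Statement 12: Let `W` be a class of morphisms of a category `C` and let `X` be a `W`-local
object (precomposition with any morphism of `W` is a bijection on maps into `X`). Then an
object `g : U ⟶ X` of `Over X` is local with respect to the morphisms of `Over X` whose
underlying morphism lies in `W`, if and only if `U` is `W`-local in `C`.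
-/

open CategoryTheory Limits

universe v u

theorem statement12 {C : Type u} [Category.{v} C] (W : MorphismProperty C) (X : C)
    (hX : ∀ {A B : C} (f : A ⟶ B), W f →
      Function.Bijective (fun g : B ⟶ X => f ≫ g))
    (g : Over X) :
    (∀ {A B : Over X} (φ : A ⟶ B), W φ.left →
        Function.Bijective (fun ψ : B ⟶ g => φ ≫ ψ)) ↔
      (∀ {A B : C} (f : A ⟶ B), W f →
        Function.Bijective (fun ψ : B ⟶ g.left => f ≫ ψ)) := by
  constructor
  · intro hloc A B f hf
    constructor
    · -- injectivity
      intro ψ₁ ψ₂ h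
      simp only at h
      -- first, the maps to X agree
      have hx : ψ₁ ≫ g.hom = ψ₂ ≫ g.hom := by
        apply (hX f hf).1
        simp only [← Category.assoc, h]
      -- work in the slice
      set A' : Over X := Over.mk (f ≫ ψ₁ ≫ g.hom)
      set B' : Over X := Over.mk (ψ₁ ≫ g.hom)
      have hA' : A'.hom = f ≫ ψ₁ ≫ g.hom := rfl
      let φ : A' ⟶ B' := Over.homMk f
      have hWφ : W φ.left := hf
      let Ψ₁ : B' ⟶ g := Over.homMk ψ₁
      let Ψ₂ : B' ⟶ g := Over.homMk ψ₂ (by simpa [B'] using hx.symm)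
      have : φ ≫ Ψ₁ = φ ≫ Ψ₂ := by
        ext
        simpa [φ, Ψ₁, Ψ₂] using h
      have := (hloc φ hWφ).1 this
      have := congrArg CommaMorphism.left this
      simpa [Ψ₁, Ψ₂] using this
    · -- surjectivity
      intro ψA
      -- lift the structure map along f
      obtain ⟨b, hb⟩ := (hX f hf).2 (ψA ≫ g.hom)
      simp only at hb
      let A' : Over X := Over.mk (ψA ≫ g.hom)
      let B' : Over X := Over.mk b
      let φ : A' ⟶ B' := Over.homMk f (by simpa [A', B'] using hb)
      have hWφ : W φ.left := hf
      let Ψ : A' ⟶ g := Over.homMk ψA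
      obtain ⟨Ψ', hΨ'⟩ := (hloc φ hWφ).2 Ψ
      refine ⟨Ψ'.left, ?_⟩
      have := congrArg CommaMorphism.left hΨ'
      simpa [φ, Ψ] using this
  · intro hloc A B φ hφ
    constructor
    · intro ψ₁ ψ₂ h
      ext
      apply (hloc φ.left hφ).1
      simpa using congrArg CommaMorphism.left h
    · intro ψ
      obtain ⟨u, hu⟩ := (hloc φ.left hφ).2 ψ.left
      simp only at hu
      have hxu : u ≫ g.hom = B.hom := by
        apply (hX φ.left hφ).1
        simp only [← Category.assoc, hu]
        simp
      refine ⟨Over.homMk u hxu, ?_⟩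
      ext
      simpa using hu
end

section
/- Let C be a cocomplete category with pullbacks in which all small colimits are universal (every colimit cocone of a small diagram remains a colimit cocone after pullback along any morphism to its vertex, i.e., every colimit cocone is a universal colimit in Mathlib's sense). Let C₀ be a small full subcategory of C such that every object of C is the colimit of some small diagram taking values in C₀. Let S be a class of morphisms of C that is stable under pullback and closed under small colimits in the arrow category of C (for every small diagram in Arrow C all of whose objects lie in S, the vertex of any colimit cocone lies in S). Then a morphism f : X ⟶ Y lies in S if and only if for every object V of C₀ and every morphism g : V ⟶ Y, the pullback morphism V ×_Y X ⟶ V lies in S. -/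
/-!
Statement 13: Let `C` be a cocomplete category with pullbacks in which all small colimits
are universal, and let `C₀` be a small family of objects such that every object of `C` is
the colimit of a small diagram taking values (up to isomorphism) in `C₀`. Let `S` be a
class of morphisms stable under pullback and closed under small colimits in the arrow
category. Then `f : X ⟶ Y` lies in `S` iff all its pullbacks along morphisms `V ⟶ Y` with
`V` in `C₀` lie in `S`.
-/

open CategoryTheory Limits

universe u

theorem statement13 {C : Type (u + 1)} [Category.{u} C]
    [HasColimitsOfSize.{u, u} C] [HasPullbacks C]
    (huniv : ∀ (K : Type u) [SmallCategory K] (D : K ⥤ C) (c : Cocone D),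
      Nonempty (IsColimit c) → IsUniversalColimit c)
    {ι : Type u} (G : ι → C)
    (hgen : ∀ Y : C, ∃ (K : Type u) (instK : SmallCategory K),
      letI := instK
      ∃ (D : K ⥤ C) (c : Cocone D),
        Nonempty (IsColimit c) ∧ c.pt = Y ∧ ∀ k : K, ∃ i : ι, Nonempty (D.obj k ≅ G i))
    (S : MorphismProperty C)
    (hpb : ∀ {X Y Z : C} (f : X ⟶ Y) (g : Z ⟶ Y), S f → S (pullback.snd f g))
    (hcolim : ∀ (K : Type u) [SmallCategory K] (D : K ⥤ Arrow C),
      (∀ k : K, S (D.obj k).hom) → ∀ (c : Cocone D), Nonempty (IsColimit c) → S c.pt.hom)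
    {X Y : C} (f : X ⟶ Y) :
    S f ↔ ∀ (i : ι) (g : G i ⟶ Y), S (pullback.snd f g) := by
  constructor
  · intro hf i g
    exact hpb f g hf
  · intro H
    -- `S` is closed under isomorphisms in the arrow category
    have hiso : ∀ {a b : Arrow C} (_ : a ≅ b), S a.hom → S b.hom := by
      intro a b e ha
      refine hcolim (Discrete PUnit.{u+1}) ((Functor.const _).obj a) (fun _ => ha)
        ⟨b, Discrete.natTrans fun _ => e.hom⟩ ⟨?_⟩
      exact
        { desc := fun s => e.inv ≫ s.ι.app ⟨⟨⟩⟩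
          fac := fun s => by rintro ⟨⟨⟩⟩; simp
          uniq := fun s m hm => by
            have h := hm ⟨⟨⟩⟩
            simp only [Discrete.natTrans_app] at h
            dsimp only
            rw [← h, Iso.inv_hom_id_assoc] }
    obtain ⟨K, instK, D, c, ⟨hc⟩, hpt, hobj⟩ := hgen Y
    subst hpt
    -- the pulled-back diagram
    let F' : K ⥤ C :=
      { obj := fun k => pullback f (c.ι.app k)
        map := fun {k k'} φ =>
          pullback.map f (c.ι.app k) f (c.ι.app k') (𝟙 X) (D.map φ) (𝟙 c.pt)
            (by simp) (by simp)
        map_id := by intro k; apply pullback.hom_ext <;> simp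
        map_comp := by intro k k' k'' φ ψ; apply pullback.hom_ext <;> simp [pullback.map_comp] }
    let c' : Cocone F' :=
      { pt := X
        ι :=
          { app := fun k => pullback.fst f (c.ι.app k)
            naturality := by intro k k' φ; exact pullback.lift_fst _ _ _ } }
    let α : F' ⟶ D :=
      { app := fun k => pullback.snd f (c.ι.app k)
        naturality := by intro k k' φ; exact pullback.lift_snd _ _ _ }
    have hpull : ∀ k : K, IsPullback (c'.ι.app k) (α.app k) f (c.ι.app k) := fun k =>
      IsPullback.of_hasPullback f (c.ι.app k)
    have hw : α ≫ c.ι = c'.ι ≫ (Functor.const K).map f := by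
      ext k
      exact pullback.condition.symm
    have heq : NatTrans.Equifibered α := by
      intro k k' φ
      refine IsPullback.of_right ?_ (pullback.lift_snd _ _ _) (hpull k')
      have h1 : F'.map φ ≫ pullback.fst f (c.ι.app k') = pullback.fst f (c.ι.app k) := by
        exact (pullback.lift_fst _ _ _).trans (Category.comp_id _)
      have h2 : D.map φ ≫ c.ι.app k' = c.ι.app k := c.w φ
      rw [show (α.app k : _) = pullback.snd f (c.ι.app k) from rfl, h1, h2]
      exact hpull k
    obtain ⟨hc'⟩ := huniv K D c ⟨hc⟩ c' α f hw heq hpull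
    -- each pulled-back arrow lies in S
    have hSk : ∀ k : K, S (pullback.snd f (c.ι.app k)) := by
      intro k
      obtain ⟨i, ⟨e⟩⟩ := hobj k
      have h1 : S (pullback.snd f (e.inv ≫ c.ι.app k)) := H i _
      have hbot : IsPullback (e.inv ≫ c.ι.app k) e.inv (𝟙 c.pt) (c.ι.app k) :=
        IsPullback.of_vert_isIso (snd := e.inv) (f := 𝟙 c.pt) ⟨by simp⟩
      have hp : IsPullback (pullback.fst f (e.inv ≫ c.ι.app k))
          (pullback.snd f (e.inv ≫ c.ι.app k) ≫ e.inv) (f ≫ 𝟙 c.pt) (c.ι.app k) :=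
        (IsPullback.of_hasPullback f (e.inv ≫ c.ι.app k)).paste_vert hbot
      rw [Category.comp_id] at hp
      refine hiso (a := Arrow.mk (pullback.snd f (e.inv ≫ c.ι.app k)))
        (b := Arrow.mk (pullback.snd f (c.ι.app k)))
        (Arrow.isoMk hp.isoPullback e.symm ?_) h1
      exact hp.isoPullback_hom_snd
    -- the diagram in the arrow category
    let E : K ⥤ Arrow C :=
      { obj := fun k => Arrow.mk (pullback.snd f (c.ι.app k))
        map := fun {k k'} φ => Arrow.homMk (u := F'.map φ) (v := D.map φ) (pullback.lift_snd _ _ _)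
        map_id := by
          intro k
          ext
          · exact F'.map_id k
          · exact D.map_id k
        map_comp := by
          intro k k' k'' φ ψ
          ext
          · exact F'.map_comp φ ψ
          · exact D.map_comp φ ψ }
    let cc : Cocone E :=
      { pt := Arrow.mk f
        ι :=
          { app := fun k => Arrow.homMk (u := c'.ι.app k) (v := c.ι.app k) pullback.condition
            naturality := by
              intro k k' φ
              ext
              · show F'.map φ ≫ c'.ι.app k' = c'.ι.app k ≫ 𝟙 _
                rw [Category.comp_id]
                exact c'.w φ
              · show D.map φ ≫ c.ι.app k' = c.ι.app k ≫ 𝟙 _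
                rw [Category.comp_id]
                exact c.w φ } }
    -- the two component cocones of a cocone over `E`
    let Ls : Cocone E → Cocone F' := fun s =>
      { pt := s.pt.left
        ι :=
          { app := fun k => (s.ι.app k).left
            naturality := by
              intro k k' φ
              exact congrArg CommaMorphism.left (s.ι.naturality φ) } }
    let Rs : Cocone E → Cocone D := fun s =>
      { pt := s.pt.right
        ι :=
          { app := fun k => (s.ι.app k).right
            naturality := by
              intro k k' φ
              exact congrArg CommaMorphism.right (s.ι.naturality φ) } }
    have hdesc : ∀ s : Cocone E,
        hc'.desc (Ls s) ≫ s.pt.hom = f ≫ hc.desc (Rs s) := by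
      intro s
      apply hc'.hom_ext
      intro k
      have h1 : c'.ι.app k ≫ hc'.desc (Ls s) = (s.ι.app k).left := hc'.fac (Ls s) k
      have h2 : c.ι.app k ≫ hc.desc (Rs s) = (s.ι.app k).right := hc.fac (Rs s) k
      have h3 := Arrow.w (s.ι.app k)
      dsimp [E] at h3
      rw [← Category.assoc, h1, h3, ← h2]
      show pullback.snd f (c.ι.app k) ≫ c.ι.app k ≫ hc.desc (Rs s) =
        pullback.fst f (c.ι.app k) ≫ f ≫ hc.desc (Rs s)
      rw [← Category.assoc, ← pullback.condition, Category.assoc]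
    have hccS : S cc.pt.hom := by
      refine hcolim K E (fun k => hSk k) cc ⟨?_⟩
      exact
        { desc := fun s =>
            Arrow.homMk (u := hc'.desc (Ls s)) (v := hc.desc (Rs s)) (hdesc s)
          fac := fun s k => by
            ext
            · exact hc'.fac (Ls s) k
            · exact hc.fac (Rs s) k
          uniq := fun s m hm => by
            ext
            · exact hc'.uniq (Ls s) m.left fun k => congrArg CommaMorphism.left (hm k)
            · exact hc.uniq (Rs s) m.right fun k => congrArg CommaMorphism.right (hm k) }
    exact hccS
end

section
/- Let C be a category, let K be a small category such that C has colimits of shape K, let F : Cᵒᵖ ⥤ Type be a presheaf, and let E := CostructuredArrow yoneda F be its category of elements with projection p : E ⥤ C. Then the following are equivalent: (1) E admits colimits of shape K, and a cocone over a K-shaped diagram in E is a colimit cocone if and only if its image under p is a colimit cocone in C; (2) F preserves limits of shape Kᵒᵖ (i.e., F sends colimit cocones of K-shaped diagrams in C to limit cones in Type). -/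
/-!
Statement 14: Let `C` be a category with colimits of shape `K` (a small category), let
`F : Cᵒᵖ ⥤ Type` be a presheaf with category of elements `E = CostructuredArrow yoneda F`
and projection `p : E ⥤ C`. Then `E` has colimits of shape `K` created by `p` (a cocone
in `E` is colimiting iff its image under `p` is) if and only if `F` sends colimit cocones
of `K`-shaped diagrams in `C` to limit cones in `Type`.
-/

open CategoryTheory Limits

universe w' w v u

namespace Statement14Aux

variable {C : Type u} [Category.{v} C] {K : Type w} [Category.{w'} K]
variable {F : Cᵒᵖ ⥤ Type v}

/-- The element of `F` corresponding to an object of the category of elements. -/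
noncomputable def el (e : CostructuredArrow yoneda F) : F.obj (Opposite.op e.left) :=
  yonedaEquiv e.hom

lemma el_map {e e' : CostructuredArrow yoneda F} (f : e ⟶ e') :
    F.map f.left.op (el e') = el e := by
  rw [el, yonedaEquiv_naturality, CostructuredArrow.w f]; rfl

lemma hom_w {A B : CostructuredArrow yoneda F} (g : A.left ⟶ B.left)
    (h : F.map g.op (el B) = el A) : yoneda.map g ≫ B.hom = A.hom := by
  apply yonedaEquiv.injective
  rw [← yonedaEquiv_naturality]
  exact h

@[simp] lemma el_mk {X : C} (x : F.obj (Opposite.op X)) :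
    el (CostructuredArrow.mk (yonedaEquiv.symm x)) = x := by
  simp [el]

variable {D : K ⥤ CostructuredArrow yoneda F}

/-- The canonical section associated to a `K`-shaped diagram in the category of elements. -/
noncomputable def sec (D : K ⥤ CostructuredArrow yoneda F) :
    ((D ⋙ CostructuredArrow.proj yoneda F).op ⋙ F).sections :=
  ⟨fun k => el (D.obj k.unop), fun {k k'} f => el_map (D.map f.unop)⟩

variable {c : Cocone (D ⋙ CostructuredArrow.proj yoneda F)}

lemma joint_inj (hl : IsLimit (F.mapCone c.op)) {y y' : F.obj (Opposite.op c.pt)}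
    (h : ∀ k, F.map (c.ι.app k).op y = F.map (c.ι.app k).op y') : y = y' :=
  (Types.isLimitEquivSections hl).injective (Subtype.ext (funext fun k => h k.unop))

/-- Lift a cocone along the projection. -/
noncomputable def liftedCocone (c : Cocone (D ⋙ CostructuredArrow.proj yoneda F))
    (y : F.obj (Opposite.op c.pt))
    (hy : ∀ k, F.map (c.ι.app k).op y = el (D.obj k)) : Cocone D where
  pt := CostructuredArrow.mk (yonedaEquiv.symm y)
  ι :=
    { app := fun k => CostructuredArrow.homMk (c.ι.app k) (hom_w _ (by have h := hy k; rw [← el_mk y] at h; exact h))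
      naturality := fun k k' f => by
        apply CostructuredArrow.hom_ext
        simp; exact c.w f }

noncomputable def liftedIsColimit (hc : IsColimit c) (hl : IsLimit (F.mapCone c.op))
    (y : F.obj (Opposite.op c.pt))
    (hy : ∀ k, F.map (c.ι.app k).op y = el (D.obj k)) :
    IsColimit (liftedCocone c y hy) where
  desc s := CostructuredArrow.homMk
    (hc.desc ((CostructuredArrow.proj yoneda F).mapCocone s))
    (hom_w _ (by
      refine (joint_inj hl fun k => ?_).trans (el_mk y).symm
      show F.map (c.ι.app k).op (F.map (hc.desc ((CostructuredArrow.proj yoneda F).mapCocone s)).op (el s.pt)) = _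
      erw [← FunctorToTypes.map_comp_apply, ← op_comp, hc.fac]
      exact (el_map (s.ι.app k)).trans (hy k).symm))
  fac s k := by
    apply CostructuredArrow.hom_ext
    exact hc.fac ((CostructuredArrow.proj yoneda F).mapCocone s) k
  uniq s m h := by
    apply CostructuredArrow.hom_ext
    refine hc.uniq ((CostructuredArrow.proj yoneda F).mapCocone s) m.left fun k => ?_
    exact congrArg CommaMorphism.left (h k)

noncomputable def mappedLiftedIsColimit (hc : IsColimit c)
    (y : F.obj (Opposite.op c.pt))
    (hy : ∀ k, F.map (c.ι.app k).op y = el (D.obj k)) :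
    IsColimit ((CostructuredArrow.proj yoneda F).mapCocone (liftedCocone c y hy)) :=
  hc.ofIsoColimit (Cocones.ext (Iso.refl _) (fun k => by simp [liftedCocone]; exact Category.comp_id _))


lemma eq_of_both_lift
    (hiff : ∀ (D : K ⥤ CostructuredArrow yoneda F) (cc : Cocone D),
      (Nonempty (IsColimit cc) ↔
        Nonempty (IsColimit ((CostructuredArrow.proj yoneda F).mapCocone cc))))
    {D : K ⥤ CostructuredArrow yoneda F} {c : Cocone (D ⋙ CostructuredArrow.proj yoneda F)}
    (hc : IsColimit c) {x₁ x₂ : F.obj (Opposite.op c.pt)}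
    (h₁ : ∀ k, F.map (c.ι.app k).op x₁ = el (D.obj k))
    (h₂ : ∀ k, F.map (c.ι.app k).op x₂ = el (D.obj k)) : x₁ = x₂ := by
  obtain ⟨hu₂⟩ := (hiff D (liftedCocone c x₂ h₂)).mpr ⟨mappedLiftedIsColimit hc x₂ h₂⟩
  have ψ := hu₂.descCoconeMorphism (liftedCocone c x₁ h₁)
  have hl : ψ.hom.left = 𝟙 c.pt := by
    apply hc.hom_ext
    intro k
    have := congrArg CommaMorphism.left (ψ.w k)
    simp [liftedCocone] at this ⊢; exact this
  have := el_map ψ.hom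
  rw [hl] at this
  simp [liftedCocone] at this; exact this

/-- Lift a diagram in `C` together with a matching section of `F` to the category of
elements. -/
noncomputable def liftDiagram (D : K ⥤ C) (s : (D.op ⋙ F).sections) :
    K ⥤ CostructuredArrow yoneda F where
  obj k := CostructuredArrow.mk (yonedaEquiv.symm (s.1 (Opposite.op k)))
  map {k k'} f := CostructuredArrow.homMk (D.map f) (hom_w _ (by rw [el_mk, el_mk]; exact s.2 f.op))
  map_id k := by apply CostructuredArrow.hom_ext; simp
  map_comp f g := by apply CostructuredArrow.hom_ext; simp

noncomputable def liftDiagramIso (D : K ⥤ C) (s : (D.op ⋙ F).sections) :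
    liftDiagram (F := F) D s ⋙ CostructuredArrow.proj yoneda F ≅ D :=
  NatIso.ofComponents (fun k => Iso.refl _) (by intros; simp [liftDiagram]; exact (Category.comp_id _).trans (Category.id_comp _).symm)

end Statement14Aux

open Statement14Aux

theorem statement14 {C : Type u} [Category.{v} C] {K : Type w} [Category.{w'} K]
    [HasColimitsOfShape K C] (F : Cᵒᵖ ⥤ Type v) :
    (HasColimitsOfShape K (CostructuredArrow yoneda F) ∧
      ∀ (D : K ⥤ CostructuredArrow yoneda F) (c : Cocone D),
        (Nonempty (IsColimit c) ↔
          Nonempty (IsColimit ((CostructuredArrow.proj yoneda F).mapCocone c)))) ↔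
      (∀ (D : K ⥤ C) (c : Cocone D), IsColimit c →
        Nonempty (IsLimit (F.mapCone c.op))) := by
  constructor
  · rintro ⟨hE, hiff⟩ D c hc
    rw [Types.isLimit_iff]
    rintro s hs
    let σ : (D.op ⋙ F).sections := ⟨s, hs⟩
    let D' := liftDiagram D σ
    let φ := liftDiagramIso D σ
    let c' := (Cocone.precompose φ.hom).obj c
    have hc' : IsColimit c' := (IsColimit.precomposeHomEquiv φ c).symm hc
    let t := colimit.cocone D'
    have ht := colimit.isColimit D'
    obtain ⟨hpt⟩ := (hiff D' t).mp ⟨ht⟩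
    let i := IsColimit.coconePointUniqueUpToIso hpt hc'
    have hcomp : ∀ k, (t.ι.app k).left ≫ i.hom = c.ι.app k := by
      intro k
      have := IsColimit.comp_coconePointUniqueUpToIso_hom hpt hc' k
      simp [c', φ, liftDiagramIso] at this
      exact this.trans (Category.id_comp _)
    have hel : ∀ k : K, el (D'.obj k) = s (Opposite.op k) := fun k => el_mk _
    have hx : ∀ j, (F.mapCone c.op).π.app j (F.map i.inv.op (el t.pt)) = s j := by
      intro j
      show F.map (c.ι.app j.unop).op _ = s j
      have inner : F.map i.hom.op (F.map i.inv.op (el t.pt)) = el t.pt := by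
        erw [← FunctorToTypes.map_comp_apply, ← op_comp, Iso.hom_inv_id, op_id,
          FunctorToTypes.map_id_apply]
      erw [← hcomp, op_comp, FunctorToTypes.map_comp_apply, inner]
      exact (el_map (t.ι.app j.unop)).trans (hel j.unop)
    refine ⟨F.map i.inv.op (el t.pt), hx, fun x' hx' => ?_⟩
    refine eq_of_both_lift hiff hc' (fun k => ?_) (fun k => ?_)
    · have := hx' (Opposite.op k)
      rw [hel k]
      show F.map (𝟙 _ ≫ c.ι.app k).op _ = _
      rw [Category.id_comp]
      exact this
    · have := hx (Opposite.op k)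
      rw [hel k]
      show F.map (𝟙 _ ≫ c.ι.app k).op _ = _
      rw [Category.id_comp]
      exact this
  · intro H
    have key : ∀ D : K ⥤ CostructuredArrow yoneda F, ∃ t : Cocone D,
        Nonempty (IsColimit t) ∧
          Nonempty (IsColimit ((CostructuredArrow.proj yoneda F).mapCocone t)) := by
      intro D
      have hc := colimit.isColimit (D ⋙ CostructuredArrow.proj yoneda F)
      obtain ⟨hl⟩ := H _ _ hc
      let y := (Types.isLimitEquivSections hl).symm (sec D)
      have hy : ∀ k, F.map ((colimit.cocone (D ⋙ CostructuredArrow.proj yoneda F)).ι.app k).op y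
          = el (D.obj k) :=
        fun k => Types.isLimitEquivSections_symm_apply hl (sec D) (Opposite.op k)
      exact ⟨liftedCocone _ y hy, ⟨liftedIsColimit hc hl y hy⟩,
        ⟨mappedLiftedIsColimit hc y hy⟩⟩
    constructor
    · exact ⟨fun D => (key D).elim fun t h => HasColimit.mk ⟨t, h.1.some⟩⟩
    · intro D s
      obtain ⟨t, ⟨ht⟩, ⟨hpt⟩⟩ := key D
      constructor
      · rintro ⟨hs⟩
        exact ⟨hpt.ofIsoColimit
          ((Cocones.functoriality D (CostructuredArrow.proj yoneda F)).mapIso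
            (ht.uniqueUpToIso hs))⟩
      · rintro ⟨hps⟩
        have heq : (CostructuredArrow.proj yoneda F).map (ht.desc s) =
            hpt.desc ((CostructuredArrow.proj yoneda F).mapCocone s) := by
          refine hpt.uniq ((CostructuredArrow.proj yoneda F).mapCocone s)
            ((CostructuredArrow.proj yoneda F).map (ht.desc s)) fun k => ?_
          show (CostructuredArrow.proj yoneda F).map (t.ι.app k) ≫ _ = _
          rw [← Functor.map_comp, ht.fac]
          rfl
        haveI : IsIso ((CostructuredArrow.proj yoneda F).map (ht.desc s)) := by
          rw [heq]
          haveI := IsColimit.hom_isIso hpt hps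
            (hpt.descCoconeMorphism ((CostructuredArrow.proj yoneda F).mapCocone s))
          exact (Cocones.forget _).map_isIso
            (hpt.descCoconeMorphism ((CostructuredArrow.proj yoneda F).mapCocone s))
        haveI : IsIso (ht.desc s) :=
          isIso_of_reflects_iso (ht.desc s) (CostructuredArrow.proj yoneda F)
        exact ⟨ht.ofPointIso⟩
end

section
/- Let C be a small category (in universe u) equipped with a Grothendieck topology J. Then sheafification of type-valued presheaves commutes with universe enlargement: there is a natural isomorphism of functors (Cᵒᵖ ⥤ Type u) ⥤ Sheaf J (Type (max u v)) between presheafToSheaf J (Type u) followed by the functor Sheaf J (Type u) ⥤ Sheaf J (Type (max u v)) induced by postcomposition with uliftFunctor, and postcomposition with uliftFunctor on presheaves followed by presheafToSheaf J (Type (max u v)). In particular, for every presheaf P : Cᵒᵖ ⥤ Type u, the ulift of the sheafification of P is canonically isomorphic to the sheafification of the ulift of P. -/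
open CategoryTheory Limits

universe v u

section Aux

variable {C : Type u} [SmallCategory C] (J : GrothendieckTopology C)

lemma aux_locallyInjective {F G : Cᵒᵖ ⥤ Type u} (f : F ⟶ G)
    [Presheaf.IsLocallyInjective J f] :
    Presheaf.IsLocallyInjective J (Functor.whiskerRight f uliftFunctor.{v, u}) where
  equalizerSieve_mem {X} x y h := by
    have h' : f.app X x.down = f.app X y.down := by
      have := congrArg ULift.down h
      exact this
    have := Presheaf.equalizerSieve_mem J f x.down y.down h'
    convert this using 1
    ext Y g
    constructor
    · intro hg
      exact congrArg ULift.down hg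
    · intro hg
      exact congrArg ULift.up hg

lemma aux_locallySurjective_s15 {F G : Cᵒᵖ ⥤ Type u} (f : F ⟶ G)
    [Presheaf.IsLocallySurjective J f] :
    Presheaf.IsLocallySurjective J (Functor.whiskerRight f uliftFunctor.{v, u}) where
  imageSieve_mem {U} s := by
    have := Presheaf.imageSieve_mem J f s.down
    convert this using 1
    ext V i
    constructor
    · rintro ⟨t, ht⟩
      exact ⟨t.down, congrArg ULift.down ht⟩
    · rintro ⟨t, ht⟩
      exact ⟨ULift.up t, congrArg ULift.up ht⟩

end Aux

theorem statement15 {C : Type u} [SmallCategory C] (J : GrothendieckTopology C) :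
    haveI : EssentiallySmall.{max u v} C := essentiallySmall_of_small_of_locallySmall.{max u v} C
    haveI : HasSheafify J (Type (max u v)) :=
      hasSheafifyEssentiallySmallSite J (Type (max u v))
    Nonempty
      ((presheafToSheaf J (Type u) ⋙ sheafCompose J uliftFunctor.{v, u}) ≅
        ((Functor.whiskeringRight Cᵒᵖ (Type u) (Type (max u v))).obj uliftFunctor.{v, u} ⋙
          presheafToSheaf J (Type (max u v)))) := by
  haveI : EssentiallySmall.{max u v} C := essentiallySmall_of_small_of_locallySmall.{max u v} C
  haveI : HasSheafify J (Type (max u v)) :=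
    hasSheafifyEssentiallySmallSite J (Type (max u v))
  haveI : J.WEqualsLocallyBijective (Type (max u v)) :=
    GrothendieckTopology.WEqualsLocallyBijective.ofEssentiallySmall (A := Type (max u v)) J
  haveI : J.PreservesSheafification uliftFunctor.{v, u} := by
    constructor
    intro P Q f hf
    rw [GrothendieckTopology.W_iff_isLocallyBijective] at hf
    obtain ⟨h1, h2⟩ := hf
    show J.W (Functor.whiskerRight f uliftFunctor.{v, u})
    rw [GrothendieckTopology.W_iff_isLocallyBijective]
    exact ⟨aux_locallyInjective J f, aux_locallySurjective_s15 J f⟩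
  exact ⟨(sheafComposeNatIso J uliftFunctor.{v, u}
    (sheafificationAdjunction J (Type u)) (sheafificationAdjunction J (Type (max u v)))).symm⟩
end

section
/- Let C be a category with pullbacks and a terminal object, equipped with its cartesian monoidal structure, and suppose C has coproducts of all small families of objects which are disjoint and universal. Let G be a group, and let A := ∐_{g : G} ⊤ be the G-indexed coproduct of copies of the terminal object, with coproduct inclusions ι_g. Let M be a monoid object of C (an object of Mon_ C) whose underlying object is A, whose unit ⊤ ⟶ A is the inclusion ι_1 indexed by the identity element of G, and whose multiplication A ⊗ A ⟶ A satisfies: for all g, h in G, the composite (ι_g ⊗ ι_h) ≫ mul : ⊤ ⊗ ⊤ ⟶ A equals the canonical isomorphism ⊤ ⊗ ⊤ ≅ ⊤ followed by ι_{g·h}. Then there exists an equivalence of categories Φ from the category Action C G of G-objects of C to the category Mod_ M of M-module objects in C, such that Φ followed by the forgetful functor Mod_ M ⥤ C is naturally isomorphic to the forgetful (evaluation) functor Action C G ⥤ C. -/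
/-!
Statement 17: Let `C` be a category with pullbacks and a terminal object, equipped with
its cartesian monoidal structure, having small coproducts which are disjoint and
universal. Let `G` be a group and let `M` be a monoid object whose underlying object is
the `G`-indexed coproduct `∐_{g : G} ⊤`, whose unit is the inclusion at `1` and whose
multiplication sends (inclusion `g`) ⊗ (inclusion `h`) to the inclusion at `g * h`. Then
there is an equivalence `Action C G ≌ Mod_ M` compatible with the forgetful functors.
-/

open CategoryTheory Limits MonoidalCategory

universe u


open CategoryTheory Limits MonoidalCategory


namespace S17Aux
set_option linter.unusedSectionVars false

variable {C : Type (u + 1)} [LargeCategory C] [HasTerminal C] [HasBinaryProducts C]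

noncomputable abbrev cmc : CartesianMonoidalCategory C :=
  @CartesianMonoidalCategory.ofHasFiniteProducts C _ hasFiniteProducts_of_has_binary_and_terminal

attribute [local instance] cmc

open CategoryTheory.SemiCartesianMonoidalCategory (toUnit toUnit_unique)

variable {G : Type u} [Group G] [HasCoproduct (fun _ : G => ⊤_ C)]

/-- inclusion -/
noncomputable abbrev inc (g : G) : 𝟙_ C ⟶ ∐ (fun _ : G => ⊤_ C) :=
  Sigma.ι (fun _ : G => ⊤_ C) g

noncomputable def jmap (g : G) (X : C) : X ⟶ (∐ (fun _ : G => ⊤_ C)) ⊗ X :=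
  (λ_ X).inv ≫ ((inc (C := C) g) ▷ X)

lemma jmap_eq (g : G) (X : C) :
    jmap g X = CartesianMonoidalCategory.lift (toUnit X ≫ inc g) (𝟙 X) := by
  apply CartesianMonoidalCategory.hom_ext <;>
    simp [jmap]

lemma jmap_natural (g : G) {X Y : C} (h : X ⟶ Y) :
    h ≫ jmap g Y = jmap g X ≫ ((∐ (fun _ : G => ⊤_ C)) ◁ h) := by
  apply CartesianMonoidalCategory.hom_ext <;>
    simp [jmap_eq]


variable [HasPullbacks C]

/-- universality hypothesis shape -/
abbrev Huniv (C : Type (u + 1)) [LargeCategory C] [HasPullbacks C] : Prop :=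
  ∀ (ι : Type u) (X : ι → C) (c : Cofan X), IsColimit c →
    ∀ {Y : C} (f : Y ⟶ c.pt),
      Nonempty (IsColimit (Cofan.mk Y (fun i => pullback.snd (c.inj i) f)))

noncomputable def isColimitJ (huniv : Huniv C) (X : C) :
    IsColimit (Cofan.mk ((∐ (fun _ : G => ⊤_ C)) ⊗ X) (fun g : G => jmap g X)) := by
  have c0 : IsColimit (Cofan.mk (∐ (fun _ : G => ⊤_ C)) (fun g : G => inc (C := C) g)) :=
    coproductIsCoproduct (fun _ : G => ⊤_ C)
  have t := (huniv G _ _ c0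
    (CartesianMonoidalCategory.fst (∐ (fun _ : G => ⊤_ C)) X)).some
  let P : G → C := fun g =>
    pullback (inc (C := C) g) (CartesianMonoidalCategory.fst (∐ (fun _ : G => ⊤_ C)) X)
  let e : ∀ g : G, P g ⟶ X := fun g => pullback.snd _ _ ≫ CartesianMonoidalCategory.snd _ _
  let uu : ∀ g : G, X ⟶ P g := fun g =>
    pullback.lift (toUnit X) (CartesianMonoidalCategory.lift (toUnit X ≫ inc g) (𝟙 X))
      (by simp)
  have hue : ∀ g, uu g ≫ e g = 𝟙 X := by
    intro g; simp only [uu, e]; rw [pullback.lift_snd_assoc, CartesianMonoidalCategory.lift_snd]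
  have hup : ∀ g, uu g ≫ pullback.snd _ _ = jmap g X := by
    intro g; simp only [uu]; rw [pullback.lift_snd, jmap_eq]
  have hpj : ∀ g, pullback.snd (inc (C := C) g) (CartesianMonoidalCategory.fst _ _) =
      e g ≫ jmap g X := by
    intro g
    apply CartesianMonoidalCategory.hom_ext
    · have h1 : e g ≫ toUnit X =
          pullback.fst (inc (C := C) g) (CartesianMonoidalCategory.fst _ _) :=
        toUnit_unique _ _
      rw [jmap_eq, Category.assoc, CartesianMonoidalCategory.lift_fst, ← Category.assoc, h1,
        pullback.condition]
    · rw [jmap_eq, Category.assoc, CartesianMonoidalCategory.lift_snd, Category.comp_id]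
  refine mkCofanColimit _
    (fun s => t.desc (Cofan.mk s.pt (fun g => e g ≫ s.inj g))) ?_ ?_
  · intro s g
    have ht := t.fac (Cofan.mk s.pt (fun g => e g ≫ s.inj g)) ⟨g⟩
    simp only [Cofan.mk_pt, Cofan.mk_ι_app, cofan_mk_inj] at ht ⊢
    rw [← hup g, Category.assoc, ht, ← Category.assoc, hue, Category.id_comp]
  · intro s m hm
    apply t.hom_ext
    rintro ⟨g⟩
    have ht := t.fac (Cofan.mk s.pt (fun g => e g ≫ s.inj g)) ⟨g⟩
    simp only [Cofan.mk_pt, Cofan.mk_ι_app, cofan_mk_inj] at ht hm ⊢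
    rw [ht, hpj g, Category.assoc, hm g]

lemma hom_ext_j (huniv : Huniv C) {X Y : C}
    {f f' : (∐ (fun _ : G => ⊤_ C)) ⊗ X ⟶ Y}
    (w : ∀ g : G, jmap g X ≫ f = jmap g X ≫ f') : f = f' :=
  Cofan.IsColimit.hom_ext (isColimitJ huniv X) _ _ (by simpa using w)


lemma jmap_jmap (g h : G) (X : C) :
    jmap h X ≫ jmap g ((∐ (fun _ : G => ⊤_ C)) ⊗ X) ≫ (α_ _ _ X).inv =
      (λ_ X).inv ≫ ((((λ_ (𝟙_ C)).inv ≫ ((inc (C := C) g) ⊗ₘ (inc (C := C) h)))) ▷ X) := by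
  apply CartesianMonoidalCategory.hom_ext
  · apply CartesianMonoidalCategory.hom_ext <;>
      simp [jmap_eq]
  · simp [jmap_eq]

section
variable {mul : (∐ (fun _ : G => ⊤_ C)) ⊗ (∐ (fun _ : G => ⊤_ C)) ⟶ ∐ (fun _ : G => ⊤_ C)}

lemma act_comp_act {X : C} (act : (∐ (fun _ : G => ⊤_ C)) ⊗ X ⟶ X) (g h : G) :
    jmap h X ≫ jmap g ((∐ (fun _ : G => ⊤_ C)) ⊗ X) ≫
        ((∐ (fun _ : G => ⊤_ C)) ◁ act) ≫ act =
      (jmap h X ≫ act) ≫ (jmap g X ≫ act) := by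
  have := jmap_natural (C := C) (G := G) g act
  rw [Category.assoc]
  rw [← Category.assoc (jmap g _), ← this]
  simp

lemma act_mul (hmul : ∀ g h : G,
      ((inc (C := C) g) ⊗ₘ (inc (C := C) h)) ≫ mul
        = (λ_ (𝟙_ C)).hom ≫ inc (g * h))
    {X : C} (act : (∐ (fun _ : G => ⊤_ C)) ⊗ X ⟶ X) (g h : G) :
    jmap h X ≫ jmap g ((∐ (fun _ : G => ⊤_ C)) ⊗ X) ≫ (α_ _ _ X).inv ≫
        (mul ▷ X) ≫ act =
      jmap (g * h) X ≫ act := by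
  have h1 : jmap h X ≫ jmap g ((∐ (fun _ : G => ⊤_ C)) ⊗ X) ≫ (α_ _ _ X).inv ≫
      (mul ▷ X) ≫ act
      = ((λ_ X).inv ≫ ((((λ_ (𝟙_ C)).inv ≫ ((inc (C := C) g) ⊗ₘ (inc (C := C) h)))) ▷ X)) ≫
        (mul ▷ X) ≫ act := by
    rw [← jmap_jmap]
    simp only [Category.assoc]
  rw [h1, Category.assoc, ← Category.assoc _ (mul ▷ X), ← comp_whiskerRight,
    Category.assoc, hmul g h, Iso.inv_hom_id_assoc, jmap]
  simp only [Category.assoc]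

end

end S17Aux

open S17Aux


theorem statement17 {C : Type (u + 1)} [LargeCategory C]
    [HasPullbacks C] [HasTerminal C] [HasBinaryProducts C]
    (hco : ∀ (ι : Type u) (X : ι → C), HasCoproduct X)
    (hmono : ∀ (ι : Type u) (X : ι → C) (c : Cofan X), IsColimit c → ∀ i, Mono (c.inj i))
    (hdisj : ∀ (ι : Type u) (X : ι → C) (c : Cofan X), IsColimit c →
      ∀ i j, i ≠ j → Nonempty (IsInitial (pullback (c.inj i) (c.inj j))))
    (huniv : ∀ (ι : Type u) (X : ι → C) (c : Cofan X), IsColimit c →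
      ∀ {Y : C} (f : Y ⟶ c.pt),
        Nonempty (IsColimit (Cofan.mk Y (fun i => pullback.snd (c.inj i) f))))
    (G : Type u) [Group G] :
    letI : CartesianMonoidalCategory C := @CartesianMonoidalCategory.ofHasFiniteProducts C _
      hasFiniteProducts_of_has_binary_and_terminal
    haveI : HasCoproduct (fun _ : G => ⊤_ C) := hco G _
    ∀ (M : Mon C) (hX : M.X = ∐ (fun _ : G => ⊤_ C)),
      MonObj.one (X := M.X) ≫ eqToHom hX = Sigma.ι (fun _ : G => ⊤_ C) (1 : G) →
      (∀ g h : G,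
        ((Sigma.ι (fun _ : G => ⊤_ C) g ≫ eqToHom hX.symm) ⊗ₘ
            (Sigma.ι (fun _ : G => ⊤_ C) h ≫ eqToHom hX.symm)) ≫ MonObj.mul (X := M.X) ≫ eqToHom hX =
          (λ_ (𝟙_ C)).hom ≫ Sigma.ι (fun _ : G => ⊤_ C) (g * h)) →
      ∃ Φ : Action C (MonCat.of G) ≌ Mod C M.X,
        Nonempty (Φ.functor ⋙ Mod.forget M.X ≅ Action.forget C (MonCat.of G)) := by
  letI : CartesianMonoidalCategory C := @CartesianMonoidalCategory.ofHasFiniteProducts C _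
    hasFiniteProducts_of_has_binary_and_terminal
  haveI : HasCoproduct (fun _ : G => ⊤_ C) := hco G _
  intro M hX hone hmul
  obtain ⟨MX, inst⟩ := M
  dsimp only at hX hone hmul ⊢
  subst hX
  simp only [eqToHom_refl, Category.comp_id, Category.id_comp] at hone hmul
  have huniv' : Huniv C := huniv
  -- desc of an action
  let act : ∀ Z : Action C (MonCat.of G), (∐ (fun _ : G => ⊤_ C)) ⊗ Z.V ⟶ Z.V :=
    fun Z => Cofan.IsColimit.desc (isColimitJ huniv' Z.V) (fun g => Z.ρ g)
  have hfac : ∀ (Z : Action C (MonCat.of G)) (g : G), jmap g Z.V ≫ act Z = Z.ρ g := by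
    intro Z g
    simpa using Cofan.IsColimit.fac (isColimitJ huniv' Z.V) (fun g => Z.ρ g) g
  have hone' : ∀ X : C, (λ_ X).inv ≫ ((MonObj.one (X := ∐ fun _ : G => ⊤_ C)) ▷ X) =
      jmap (1 : G) X := by
    intro X; rw [hone]; rfl
  -- the functor
  let F : Action C (MonCat.of G) ⥤ Mod C (∐ fun _ : G => ⊤_ C) :=
    { obj := fun Z =>
        { X := Z.V
          mod := {
          smul := act Z
          one_smul := by
            change ((MonObj.one (X := ∐ fun _ : G => ⊤_ C)) ▷ Z.V) ≫ act Z = (λ_ Z.V).hom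
            rw [← cancel_epi (λ_ Z.V).inv, Iso.inv_hom_id, ← Category.assoc, hone' Z.V,
              hfac Z 1, Action.ρ_one]
          mul_smul := by
            change ((MonObj.mul (X := ∐ fun _ : G => ⊤_ C)) ▷ Z.V) ≫ act Z =
              (α_ _ _ Z.V).hom ≫ (_ ◁ act Z) ≫ act Z
            rw [← cancel_epi (α_ _ _ Z.V).inv, Iso.inv_hom_id_assoc]
            apply hom_ext_j huniv'
            intro g
            apply hom_ext_j huniv'
            intro h
            simp only [Category.assoc]
            rw [act_mul (mul := MonObj.mul (X := ∐ fun _ : G => ⊤_ C)) hmul (act Z) g h,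
              act_comp_act (G := G) (act Z) g h, hfac, hfac, hfac,
              ← End.mul_def]
            exact map_mul Z.ρ g h } }
      map := fun {Z₁ Z₂} f =>
        Mod.Hom.mk' f.hom (by
            change act Z₁ ≫ f.hom = (_ ◁ f.hom) ≫ act Z₂
            apply hom_ext_j huniv'
            intro g
            rw [← Category.assoc, hfac Z₁ g, f.comm g, ← Category.assoc,
              ← jmap_natural, Category.assoc, hfac Z₂ g])
      map_id := by intros; ext; rfl
      map_comp := by intros; ext; rfl }
  haveI : F.Faithful := ⟨by intro Z₁ Z₂ f f' h; ext; exact congrArg Mod.Hom.hom h⟩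
  haveI : F.Full := by
    refine ⟨fun {Z₁ Z₂} u => ⟨⟨u.hom, fun g => ?_⟩, by ext; rfl⟩⟩
    have hu : act Z₁ ≫ u.hom = ((∐ fun _ : G => ⊤_ C) ◁ u.hom) ≫ act Z₂ :=
      u.isModHom.smul_hom
    calc Z₁.ρ g ≫ u.hom = jmap g Z₁.V ≫ (act Z₁ ≫ u.hom) := by
          rw [← hfac Z₁ g, Category.assoc]
      _ = (jmap g Z₁.V ≫ ((∐ fun _ : G => ⊤_ C) ◁ u.hom)) ≫ act Z₂ := by
          rw [hu, ← Category.assoc]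
      _ = (u.hom ≫ jmap g Z₂.V) ≫ act Z₂ :=
          congrArg (· ≫ act Z₂) (jmap_natural g u.hom).symm
      _ = u.hom ≫ Z₂.ρ g := by rw [Category.assoc, hfac Z₂ g]
  haveI : F.EssSurj := by
    refine ⟨fun N => ?_⟩
    have hρmul : ∀ g h : G, jmap ((g * h : G)) N.X ≫ N.mod.smul
        = (jmap h N.X ≫ N.mod.smul) ≫ (jmap g N.X ≫ N.mod.smul) := by
      intro g h
      rw [← act_mul (mul := MonObj.mul (X := ∐ fun _ : G => ⊤_ C)) hmul N.mod.smul g h, ← act_comp_act (G := G) N.mod.smul g h]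
      refine congrArg
        (fun t => jmap h N.X ≫ jmap g ((∐ fun _ : G => ⊤_ C) ⊗ N.X) ≫ t) ?_
      rw [show (MonObj.mul (X := ∐ fun _ : G => ⊤_ C) ▷ N.X) ≫ N.mod.smul
          = (α_ _ _ _).hom ≫ (((∐ fun _ : G => ⊤_ C)) ◁ N.mod.smul) ≫ N.mod.smul from ModObj.mul_smul (M := ∐ fun _ : G => ⊤_ C) N.X,
        Iso.inv_hom_id_assoc]
    let ρ : G →* End N.X :=
      { toFun := fun g => jmap g N.X ≫ N.mod.smul
        map_one' := by
          show jmap (1 : G) N.X ≫ N.mod.smul = 𝟙 N.X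
          rw [← hone' N.X, Category.assoc,
            show (MonObj.one (X := ∐ fun _ : G => ⊤_ C) ▷ N.X) ≫ N.mod.smul = (λ_ N.X).hom
              from ModObj.one_smul (M := ∐ fun _ : G => ⊤_ C) N.X, Iso.inv_hom_id]
        map_mul' := fun g h => hρmul g h }
    let Z : Action C (MonCat.of G) := ⟨N.X, ρ⟩
    have hact : act Z = N.mod.smul := by
      apply hom_ext_j huniv'
      intro g
      rw [hfac Z g]
      rfl
    refine ⟨Z, ⟨⟨Mod.Hom.mk' (𝟙 N.X) ?_, Mod.Hom.mk' (𝟙 N.X) ?_, ?_, ?_⟩⟩⟩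
    · change act Z ≫ 𝟙 N.X = _ ◁ (𝟙 N.X) ≫ N.mod.smul
      rw [hact, MonoidalCategory.whiskerLeft_id, Category.comp_id, Category.id_comp]
    · change N.mod.smul ≫ 𝟙 N.X = _ ◁ (𝟙 N.X) ≫ act Z
      rw [hact, MonoidalCategory.whiskerLeft_id, Category.comp_id, Category.id_comp]
    · ext; exact Category.comp_id _
    · ext; exact Category.comp_id _
  haveI : F.IsEquivalence := {}
  refine ⟨F.asEquivalence, ⟨NatIso.ofComponents (fun Z => Iso.refl _) ?_⟩⟩
  intros Z₁ Z₂ f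
  simp only [Iso.refl_hom, Category.comp_id, Category.id_comp]
  change f.hom ≫ 𝟙 Z₂.V = 𝟙 Z₁.V ≫ f.hom
  rw [Category.comp_id, Category.id_comp]
end
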